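/- arXiv:0910.4857 — 7 statements merged into one kernel-verified Lean document; each statement's English description precedes it below -/
import Mathlib

section
/- Let ⟨A|R⟩ be a monoid presentation satisfying the condition C(2) and let u be a relation word. Then for any word v over A, u ≡_R v if and only if there exist n ≥ 1 and words u = u₁, u₂, …, uₙ = v such that for every 1 ≤ i < n either (uᵢ, uᵢ₊₁) ∈ R or (uᵢ₊₁, uᵢ) ∈ R. -/
open FreeMonoid

/-- The congruence on the free monoid generated by a presentation `R`. -/
def presCon {A : Type*} (R : Set (FreeMonoid A × FreeMonoid A)) : Con (FreeMonoid A) :=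
  conGen fun u v => (u, v) ∈ R

/-- `w` is a relation word of the presentation `R`. -/
def IsRelWord {A : Type*} (R : Set (FreeMonoid A × FreeMonoid A)) (w : FreeMonoid A) : Prop :=
  ∃ p ∈ R, p.1 = w ∨ p.2 = w

/-- `u` is a factor of `w`. -/
def IsFactor {A : Type*} (u w : FreeMonoid A) : Prop := ∃ p q, w = p * u * q

/-- `u` is a piece of the presentation `R`: it is empty, or occurs as a factor of two
distinct relation words, or in two different (possibly overlapping) positions within
one relation word. -/
def IsPiece {A : Type*} (R : Set (FreeMonoid A × FreeMonoid A)) (u : FreeMonoid A) : Prop :=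
  u = 1 ∨
  (∃ w₁ w₂, IsRelWord R w₁ ∧ IsRelWord R w₂ ∧ w₁ ≠ w₂ ∧ IsFactor u w₁ ∧ IsFactor u w₂) ∨
  (∃ w, IsRelWord R w ∧ ∃ p q p' q', w = p * u * q ∧ w = p' * u * q' ∧ p ≠ p')

/-- The small overlap condition `C(m)`: no relation word is a product of strictly fewer
than `m` pieces. -/
def SmallOverlapC {A : Type*} (R : Set (FreeMonoid A × FreeMonoid A)) (m : ℕ) : Prop :=
  ∀ w, IsRelWord R w → ∀ l : List (FreeMonoid A),
    (∀ x ∈ l, IsPiece R x) → l.prod = w → m ≤ l.length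

section Aux

variable {A : Type*} {R : Set (FreeMonoid A × FreeMonoid A)}

/-- One-step rewriting relation. -/
def Rw (R : Set (FreeMonoid A × FreeMonoid A)) (x y : FreeMonoid A) : Prop :=
  ∃ p q a b, (a, b) ∈ R ∧ x = p * a * q ∧ y = p * b * q

/-- Symmetric closure of one-step rewriting. -/
def RwS (R : Set (FreeMonoid A × FreeMonoid A)) (x y : FreeMonoid A) : Prop :=
  Rw R x y ∨ Rw R y x

lemma RwS.symm' {x y : FreeMonoid A} (h : RwS R x y) : RwS R y x := h.symm

lemma RwS.mul_left (z : FreeMonoid A) {x y : FreeMonoid A} (h : RwS R x y) :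
    RwS R (z * x) (z * y) := by
  rcases h with ⟨p, q, a, b, hab, hx, hy⟩ | ⟨p, q, a, b, hab, hx, hy⟩
  · exact Or.inl ⟨z * p, q, a, b, hab, by rw [hx]; simp [mul_assoc], by rw [hy]; simp [mul_assoc]⟩
  · exact Or.inr ⟨z * p, q, a, b, hab, by rw [hx]; simp [mul_assoc], by rw [hy]; simp [mul_assoc]⟩

lemma RwS.mul_right (z : FreeMonoid A) {x y : FreeMonoid A} (h : RwS R x y) :
    RwS R (x * z) (y * z) := by
  rcases h with ⟨p, q, a, b, hab, hx, hy⟩ | ⟨p, q, a, b, hab, hx, hy⟩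
  · exact Or.inl ⟨p, q * z, a, b, hab, by rw [hx]; simp [mul_assoc], by rw [hy]; simp [mul_assoc]⟩
  · exact Or.inr ⟨p, q * z, a, b, hab, by rw [hx]; simp [mul_assoc], by rw [hy]; simp [mul_assoc]⟩

/-- The rewriting equivalence as a congruence. -/
def rwCon (R : Set (FreeMonoid A × FreeMonoid A)) : Con (FreeMonoid A) where
  r := Relation.ReflTransGen (RwS R)
  iseqv := by
    refine ⟨fun _ => .refl, fun h => ?_, fun h h' => h.trans h'⟩
    exact (@Relation.ReflTransGen.stdSymm _ (RwS R) ⟨fun _ _ hh => hh.symm'⟩).symm _ _ h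
  mul' := by
    intro w x y z h h'
    have h1 : Relation.ReflTransGen (RwS R) (w * y) (x * y) :=
      Relation.ReflTransGen.lift (· * y) (fun _ _ hh => RwS.mul_right y hh) _ _ h
    have h2 : Relation.ReflTransGen (RwS R) (x * y) (x * z) :=
      Relation.ReflTransGen.lift (x * ·) (fun _ _ hh => RwS.mul_left x hh) _ _ h'
    exact h1.trans h2

lemma presCon_iff_rw {x y : FreeMonoid A} :
    presCon R x y ↔ Relation.ReflTransGen (RwS R) x y := by
  constructor
  · intro h
    have hle : presCon R ≤ rwCon R := by
      apply Con.conGen_le.mpr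
      intro a b hab
      exact Relation.ReflTransGen.single (Or.inl ⟨1, 1, a, b, hab, by simp, by simp⟩)
    exact hle h
  · intro h
    induction h with
    | refl => exact (presCon R).refl x
    | tail _ hs ih =>
      refine (presCon R).trans ih ?_
      rcases hs with ⟨p, q, a, b, hab, hx, hy⟩ | ⟨p, q, a, b, hab, hx, hy⟩
      · rw [hx, hy]
        exact (presCon R).mul ((presCon R).mul ((presCon R).refl p)
          (ConGen.Rel.of a b hab)) ((presCon R).refl q)
      · rw [hx, hy]
        exact (presCon R).symm <| (presCon R).mul ((presCon R).mul ((presCon R).refl p)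
          (ConGen.Rel.of a b hab)) ((presCon R).refl q)

lemma relWord_not_piece (hC : SmallOverlapC R 2) {w : FreeMonoid A}
    (hw : IsRelWord R w) : ¬ IsPiece R w := by
  intro hp
  have := hC w hw [w] (by simpa using hp) (by simp)
  simp at this

lemma rel_factor_eq (hC : SmallOverlapC R 2) {u r p q : FreeMonoid A}
    (hu : IsRelWord R u) (hr : IsRelWord R r) (h : u = p * r * q) :
    p = 1 ∧ q = 1 := by
  have hur : u = r := by
    by_contra hne
    exact relWord_not_piece hC hr
      (Or.inr (Or.inl ⟨u, r, hu, hr, hne, ⟨p, q, h⟩, ⟨1, 1, by simp⟩⟩))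
  subst hur
  have hlen := congrArg (fun w : FreeMonoid A => w.toList.length) h
  simp only [FreeMonoid.toList_mul, List.length_append] at hlen
  have hp : p.toList = [] := List.length_eq_zero_iff.mp (by omega)
  have hq : q.toList = [] := List.length_eq_zero_iff.mp (by omega)
  exact ⟨FreeMonoid.toList.injective (by simpa using hp),
    FreeMonoid.toList.injective (by simpa using hq)⟩

end Aux

/-- **Proposition (relation word classes in C(2) presentations).**
If `u` is a relation word of a C(2) presentation `⟨A|R⟩`, then `u ≡_R v` iff `u` and `v`
are connected by a chain of whole-word applications of relations of `R` (in either
direction). -/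
theorem statement0 {A : Type*} (R : Set (FreeMonoid A × FreeMonoid A))
    (hC : SmallOverlapC R 2) (u : FreeMonoid A) (hu : IsRelWord R u) (v : FreeMonoid A) :
    presCon R u v ↔
      Relation.ReflTransGen (fun x y => (x, y) ∈ R ∨ (y, x) ∈ R) u v := by
  rw [presCon_iff_rw]
  constructor
  · intro h
    induction h using Relation.ReflTransGen.head_induction_on with
    | refl => exact .refl
    | head hs ht ih =>
      rcases hs with ⟨p, q, x, y, hxy, hx, hy⟩ | ⟨p, q, x, y, hxy, hx, hy⟩
      · have hxrel : IsRelWord R x := ⟨(x, y), hxy, Or.inl rfl⟩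
        have hyrel : IsRelWord R y := ⟨(x, y), hxy, Or.inr rfl⟩
        obtain ⟨hp, hq⟩ := rel_factor_eq hC hu hxrel hx
        subst hp hq
        simp only [one_mul, mul_one] at hx hy
        subst hx hy
        exact Relation.ReflTransGen.head (Or.inl hxy) (ih hyrel)
      · have hxrel : IsRelWord R x := ⟨(x, y), hxy, Or.inl rfl⟩
        have hyrel : IsRelWord R y := ⟨(x, y), hxy, Or.inr rfl⟩
        obtain ⟨hp, hq⟩ := rel_factor_eq hC hu hyrel hy
        subst hp hq
        simp only [one_mul, mul_one] at hx hy
        subst hx hy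
        exact Relation.ReflTransGen.head (Or.inr hxy) (ih hxrel)
  · intro h
    induction h with
    | refl => exact .refl
    | tail _ hs ih =>
      refine ih.tail ?_
      rcases hs with hs | hs
      · exact Or.inl ⟨1, 1, _, _, hs, by simp, by simp⟩
      · exact Or.inr ⟨1, 1, _, _, hs, by simp, by simp⟩
end

section
/- Let ⟨A|R⟩ be a monoid presentation satisfying the condition C(2), let u be a relation word, and let u' be a proper factor of u (that is, u = p u' q for words p, q not both empty). Then for any word v over A, u' ≡_R v if and only if u' = v. -/
open FreeMonoid

lemma factor_mul_left {A : Type*} (a u w : FreeMonoid A) (h : IsFactor u w) :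
    IsFactor u (a * w) := by
  obtain ⟨s, t, rfl⟩ := h
  exact ⟨a * s, t, by simp [mul_assoc]⟩

lemma factor_mul_right {A : Type*} (a u w : FreeMonoid A) (h : IsFactor u w) :
    IsFactor u (w * a) := by
  obtain ⟨s, t, rfl⟩ := h
  exact ⟨s, t * a, by simp [mul_assoc]⟩

/-- A word contains a relation word as a factor. -/
def HasRelFactor {A : Type*} (R : Set (FreeMonoid A × FreeMonoid A)) (x : FreeMonoid A) : Prop :=
  ∃ w, IsRelWord R w ∧ IsFactor w x

/-- An auxiliary congruence containing `presCon R`. -/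
def goodCon {A : Type*} (R : Set (FreeMonoid A × FreeMonoid A)) : Con (FreeMonoid A) where
  r x y := x = y ∨ (HasRelFactor R x ∧ HasRelFactor R y)
  iseqv := by
    constructor
    · intro x; exact Or.inl rfl
    · rintro x y (rfl | ⟨h1, h2⟩)
      · exact Or.inl rfl
      · exact Or.inr ⟨h2, h1⟩
    · rintro x y z (rfl | ⟨h1, h2⟩) (rfl | ⟨h3, h4⟩)
      · exact Or.inl rfl
      · exact Or.inr ⟨h3, h4⟩
      · exact Or.inr ⟨h1, h2⟩
      · exact Or.inr ⟨h1, h4⟩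
  mul' := by
    rintro w x y z (rfl | ⟨⟨r1, hr1, hf1⟩, ⟨r2, hr2, hf2⟩⟩) (rfl | ⟨⟨r3, hr3, hf3⟩, ⟨r4, hr4, hf4⟩⟩)
    · exact Or.inl rfl
    · exact Or.inr ⟨⟨r3, hr3, factor_mul_left _ _ _ hf3⟩, ⟨r4, hr4, factor_mul_left _ _ _ hf4⟩⟩
    · exact Or.inr ⟨⟨r1, hr1, factor_mul_right _ _ _ hf1⟩, ⟨r2, hr2, factor_mul_right _ _ _ hf2⟩⟩
    · exact Or.inr ⟨⟨r1, hr1, factor_mul_right _ _ _ hf1⟩, ⟨r4, hr4, factor_mul_left _ _ _ hf4⟩⟩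

lemma presCon_le_goodCon {A : Type*} (R : Set (FreeMonoid A × FreeMonoid A)) :
    presCon R ≤ goodCon R := by
  apply Con.conGen_le.mpr
  rintro x y hxy
  exact Or.inr ⟨⟨x, ⟨(x, y), hxy, Or.inl rfl⟩, 1, 1, by simp⟩,
    ⟨y, ⟨(x, y), hxy, Or.inr rfl⟩, 1, 1, by simp⟩⟩

/-- **Proposition (proper factors of relation words in C(2) presentations).**
If `u` is a relation word of a C(2) presentation and `u'` is a proper factor of `u`
(i.e. `u = p * u' * q` with `p, q` not both empty), then `u' ≡_R v` iff `u' = v`. -/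
theorem statement1 {A : Type*} (R : Set (FreeMonoid A × FreeMonoid A))
    (hC : SmallOverlapC R 2) (u : FreeMonoid A) (hu : IsRelWord R u)
    (u' p q : FreeMonoid A) (hfac : u = p * u' * q) (hproper : ¬(p = 1 ∧ q = 1))
    (v : FreeMonoid A) :
    presCon R u' v ↔ u' = v := by
  constructor
  · intro h
    have hg := presCon_le_goodCon R h
    rcases hg with rfl | ⟨⟨w, hw, a, b, hab⟩, _⟩
    · rfl
    · exfalso
      by_cases huw : u = w
      · -- then u = (p*a)*u*(b*q), so all pieces are trivial
        subst huw
        rw [hab] at hfac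
        have hlen := congrArg (fun x => x.toList.length) hfac
        simp only [toList_mul, List.length_append] at hlen
        have hp : p.toList.length = 0 := by omega
        have hq : q.toList.length = 0 := by omega
        exact hproper ⟨toList.injective (by simpa using List.eq_nil_of_length_eq_zero hp),
          toList.injective (by simpa using List.eq_nil_of_length_eq_zero hq)⟩
      · have hpiece : IsPiece R w := Or.inr (Or.inl ⟨u, w, hu, hw, huw,
          ⟨p * a, b * q, by rw [hfac, hab]; simp [mul_assoc]⟩, ⟨1, 1, by simp⟩⟩)
        have h2 := hC w hw [w] (by simpa using hpiece) (by simp)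
        simp at h2
  · rintro rfl
    exact (presCon R).refl u'
end

section
/- Let ⟨A|R⟩ be a monoid presentation satisfying the condition C(2) and let a ∈ A. Then either the element [a]_R is indecomposable in the monoid presented, or the generator a is redundant. -/
open FreeMonoid

/-- A single (symmetric) rewriting step of the presentation. -/
def RewStep {A : Type*} (R : Set (FreeMonoid A × FreeMonoid A)) (u v : FreeMonoid A) : Prop :=
  ∃ p q r s, ((r, s) ∈ R ∨ (s, r) ∈ R) ∧ u = p * r * q ∧ v = p * s * q

lemma rewStep_symm {A : Type*} {R : Set (FreeMonoid A × FreeMonoid A)} {u v : FreeMonoid A}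
    (h : RewStep R u v) : RewStep R v u := by
  obtain ⟨p, q, r, s, hrs, hu, hv⟩ := h
  exact ⟨p, q, s, r, hrs.symm, hv, hu⟩

lemma rewStep_mul_left {A : Type*} {R : Set (FreeMonoid A × FreeMonoid A)} {u v : FreeMonoid A}
    (w : FreeMonoid A) (h : RewStep R u v) : RewStep R (w * u) (w * v) := by
  obtain ⟨p, q, r, s, hrs, hu, hv⟩ := h
  exact ⟨w * p, q, r, s, hrs, by rw [hu]; simp [mul_assoc], by rw [hv]; simp [mul_assoc]⟩

lemma rewStep_mul_right {A : Type*} {R : Set (FreeMonoid A × FreeMonoid A)} {u v : FreeMonoid A}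
    (w : FreeMonoid A) (h : RewStep R u v) : RewStep R (u * w) (v * w) := by
  obtain ⟨p, q, r, s, hrs, hu, hv⟩ := h
  exact ⟨p, q * w, r, s, hrs, by rw [hu]; simp [mul_assoc], by rw [hv]; simp [mul_assoc]⟩

lemma eqvGen_mul_left {A : Type*} {R : Set (FreeMonoid A × FreeMonoid A)} {u v : FreeMonoid A}
    (w : FreeMonoid A) (h : Relation.EqvGen (RewStep R) u v) :
    Relation.EqvGen (RewStep R) (w * u) (w * v) := by
  induction h with
  | rel x y hxy => exact Relation.EqvGen.rel _ _ (rewStep_mul_left w hxy)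
  | refl x => exact Relation.EqvGen.refl _
  | symm x y _ ih => exact ih.symm _ _
  | trans x y z _ _ ih1 ih2 => exact ih1.trans _ _ _ ih2

lemma eqvGen_mul_right {A : Type*} {R : Set (FreeMonoid A × FreeMonoid A)} {u v : FreeMonoid A}
    (w : FreeMonoid A) (h : Relation.EqvGen (RewStep R) u v) :
    Relation.EqvGen (RewStep R) (u * w) (v * w) := by
  induction h with
  | rel x y hxy => exact Relation.EqvGen.rel _ _ (rewStep_mul_right w hxy)
  | refl x => exact Relation.EqvGen.refl _
  | symm x y _ ih => exact ih.symm _ _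
  | trans x y z _ _ ih1 ih2 => exact ih1.trans _ _ _ ih2

/-- The equivalence generated by rewriting steps is a congruence. -/
def rewCon {A : Type*} (R : Set (FreeMonoid A × FreeMonoid A)) : Con (FreeMonoid A) where
  r := Relation.EqvGen (RewStep R)
  iseqv := Relation.EqvGen.is_equivalence _
  mul' := fun {w x y z} h1 h2 =>
    (eqvGen_mul_right y h1).trans _ _ _ (eqvGen_mul_left x h2)

lemma presCon_to_eqvGen {A : Type*} {R : Set (FreeMonoid A × FreeMonoid A)} {u v : FreeMonoid A}
    (h : presCon R u v) : Relation.EqvGen (RewStep R) u v := by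
  have hle : presCon R ≤ rewCon R := by
    apply Con.conGen_le.mpr
    intro x y hxy
    exact Relation.EqvGen.rel _ _ ⟨1, 1, x, y, Or.inl hxy, by simp, by simp⟩
  exact hle h

lemma one_not_relWord {A : Type*} {R : Set (FreeMonoid A × FreeMonoid A)}
    (hC : SmallOverlapC R 2) : ¬ IsRelWord R 1 := by
  intro h
  have := hC 1 h [] (by simp) (by simp)
  simp at this

/-- Factors of a one-letter word. -/
lemma factor_of_single {A : Type*} {a : A} {p u q : FreeMonoid A}
    (h : of a = p * u * q) : u = 1 ∨ (p = 1 ∧ u = of a ∧ q = 1) := by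
  have h' : [a] = p.toList ++ u.toList ++ q.toList := congrArg toList h
  have hl : p.toList.length + u.toList.length + q.toList.length = 1 := by
    have := congrArg List.length h'
    simp at this
    omega
  rcases Nat.eq_zero_or_pos u.toList.length with h0 | h1
  · left
    exact toList.injective (List.length_eq_zero_iff.mp h0)
  · right
    have hp : p.toList.length = 0 := by omega
    have hq : q.toList.length = 0 := by omega
    have hp1 : p = 1 := toList.injective (List.length_eq_zero_iff.mp hp)
    have hq1 : q = 1 := toList.injective (List.length_eq_zero_iff.mp hq)
    refine ⟨hp1, ?_, hq1⟩
    subst hp1; subst hq1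
    simpa using h.symm

lemma closure_mem_of_no_a {A : Type*} (R : Set (FreeMonoid A × FreeMonoid A)) (a : A)
    (w : FreeMonoid A) (hw : ∀ b ∈ w.toList, b ≠ a) :
    (presCon R).mk' w ∈
      Submonoid.closure {x : (presCon R).Quotient | ∃ b : A, b ≠ a ∧ x = (presCon R).mk' (of b)} := by
  induction w using FreeMonoid.recOn with
  | one => simpa using Submonoid.one_mem _
  | of_mul x xs ih =>
    rw [map_mul]
    refine Submonoid.mul_mem _ (Submonoid.subset_closure ⟨x, ?_, rfl⟩) (ih ?_)
    · exact hw x (by simp)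
    · intro b hb; exact hw b (by simp [hb])

lemma no_red_step {A : Type*} {R : Set (FreeMonoid A × FreeMonoid A)}
    (hC : SmallOverlapC R 2) (a : A)
    (hnr : (presCon R).mk' (of a) ∉
      Submonoid.closure {x : (presCon R).Quotient | ∃ b : A, b ≠ a ∧ x = (presCon R).mk' (of b)})
    {u v : FreeMonoid A} (h : RewStep R u v) (hu : u = of a) : v = of a := by
  obtain ⟨p, q, r, s, hrs, hu', hv⟩ := h
  subst hu
  rcases factor_of_single hu' with hr1 | ⟨hp, hr, hq⟩
  · -- the relation word `r` is empty: contradiction with C(2)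
    exfalso
    apply one_not_relWord hC
    subst hr1
    rcases hrs with h1 | h1
    · exact ⟨(1, s), h1, Or.inl rfl⟩
    · exact ⟨(s, 1), h1, Or.inr rfl⟩
  · subst hp; subst hq; subst hr
    by_cases hs : s = of a
    · simpa [hs] using hv
    · exfalso
      -- `of a` is a relation word
      have hrel_a : IsRelWord R (of a) := by
        rcases hrs with h1 | h1
        · exact ⟨(of a, s), h1, Or.inl rfl⟩
        · exact ⟨(s, of a), h1, Or.inr rfl⟩
      have hrel_s : IsRelWord R s := by
        rcases hrs with h1 | h1
        · exact ⟨(of a, s), h1, Or.inr rfl⟩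
        · exact ⟨(s, of a), h1, Or.inl rfl⟩
      -- `s` contains no occurrence of `a`
      have hnoa : ∀ b ∈ s.toList, b ≠ a := by
        intro b hb hba
        subst hba
        obtain ⟨l1, l2, hl⟩ := List.append_of_mem hb
        have hfac : IsFactor (of b) s := by
          refine ⟨ofList l1, ofList l2, toList.injective ?_⟩
          simp [hl]
        have hpiece : IsPiece R (of b) :=
          Or.inr (Or.inl ⟨of b, s, hrel_a, hrel_s, fun h => hs h.symm, ⟨1, 1, by simp⟩, hfac⟩)
        have := hC (of b) hrel_a [of b] (by simpa using hpiece) (by simp)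
        simp at this
      -- hence `[a] = [s]` lies in the closure of the other generators
      apply hnr
      have hcon : presCon R (of a) s := by
        rcases hrs with h1 | h1
        · exact ConGen.Rel.of _ _ h1
        · exact (ConGen.Rel.of _ _ h1).symm
      have : (presCon R).mk' (of a) = (presCon R).mk' s :=
        (Con.eq _).mpr hcon
      rw [this]
      exact closure_mem_of_no_a R a s hnoa

lemma no_red_eqvGen {A : Type*} {R : Set (FreeMonoid A × FreeMonoid A)}
    (hC : SmallOverlapC R 2) (a : A)
    (hnr : (presCon R).mk' (of a) ∉
      Submonoid.closure {x : (presCon R).Quotient | ∃ b : A, b ≠ a ∧ x = (presCon R).mk' (of b)})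
    {u v : FreeMonoid A} (h : Relation.EqvGen (RewStep R) u v) : u = of a ↔ v = of a := by
  induction h with
  | rel x y hxy =>
    exact ⟨no_red_step hC a hnr hxy, no_red_step hC a hnr (rewStep_symm hxy)⟩
  | refl x => exact Iff.rfl
  | symm x y _ ih => exact ih.symm
  | trans x y z _ _ ih1 ih2 => exact ih1.trans ih2

/-- **Proposition.** In a C(2) presentation, each generator `a` is either indecomposable
(its class is a non-identity element that admits no nontrivial factorisation) or
redundant (its class lies in the submonoid generated by the classes of the other
generators). -/
theorem statement3 {A : Type*} (R : Set (FreeMonoid A × FreeMonoid A))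
    (hC : SmallOverlapC R 2) (a : A) :
    ((presCon R).mk' (of a) ≠ 1 ∧
      ∀ x y : (presCon R).Quotient, x * y = (presCon R).mk' (of a) → x = 1 ∨ y = 1) ∨
    (presCon R).mk' (of a) ∈
      Submonoid.closure {x : (presCon R).Quotient | ∃ b : A, b ≠ a ∧ x = (presCon R).mk' (of b)} := by
  by_cases hred : (presCon R).mk' (of a) ∈
      Submonoid.closure {x : (presCon R).Quotient | ∃ b : A, b ≠ a ∧ x = (presCon R).mk' (of b)}
  · exact Or.inr hred
  · left
    constructor
    · intro h1
      have hcon : presCon R (of a) 1 := by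
        have : (presCon R).mk' (of a) = (presCon R).mk' 1 := by rw [map_one]; exact h1
        exact (Con.eq _).mp this
      have := (no_red_eqvGen hC a hred (presCon_to_eqvGen hcon)).mp rfl
      exact absurd (congrArg toList this) (by simp)
    · intro x y hxy
      obtain ⟨u, rfl⟩ := Con.mk'_surjective x
      obtain ⟨v, rfl⟩ := Con.mk'_surjective y
      rw [← map_mul] at hxy
      have hcon : presCon R (u * v) (of a) := (Con.eq _).mp hxy
      have huv : u * v = of a :=
        (no_red_eqvGen hC a hred (presCon_to_eqvGen hcon)).mpr rfl |>.symm ▸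
          ((no_red_eqvGen hC a hred (presCon_to_eqvGen hcon)).symm.mp rfl)
      have hl : u.toList ++ v.toList = [a] := congrArg toList huv
      rcases hu : u.toList with _ | ⟨b, l⟩
      · left
        have : u = 1 := toList.injective hu
        rw [this, map_one]
      · right
        rw [hu] at hl
        simp only [List.cons_append, List.cons.injEq] at hl
        have : v.toList = [] := (List.append_eq_nil_iff.mp hl.2).2
        have hv1 : v = 1 := toList.injective this
        rw [hv1, map_one]
end

section
/- Let m ≥ 2. Every monoid admitting a presentation satisfying the condition C(m) also admits a generator-minimal equivalence presentation satisfying C(m); that is, if M is isomorphic to the monoid presented by some C(m) presentation, then M is isomorphic to the monoid presented by some presentation which is simultaneously C(m), generator-minimal, and an equivalence presentation. -/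
open FreeMonoid

/-- The generator `a` is redundant: its class is a product of classes of other
generators. -/
def IsRedundant {A : Type*} (R : Set (FreeMonoid A × FreeMonoid A)) (a : A) : Prop :=
  (presCon R).mk' (of a) ∈
    Submonoid.closure {x : (presCon R).Quotient | ∃ b : A, b ≠ a ∧ x = (presCon R).mk' (of b)}

/-- A presentation is generator-minimal if no generator is redundant. -/
def GeneratorMinimal {A : Type*} (R : Set (FreeMonoid A × FreeMonoid A)) : Prop :=
  ∀ a : A, ¬ IsRedundant R a

/-- `⟨A|R⟩` is an equivalence presentation: `R` is an equivalence relation on the set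
of relation words. -/
def IsEquivPres {A : Type*} (R : Set (FreeMonoid A × FreeMonoid A)) : Prop :=
  (∀ w, IsRelWord R w → (w, w) ∈ R) ∧
  (∀ u v, (u, v) ∈ R → (v, u) ∈ R) ∧
  (∀ u v w, (u, v) ∈ R → (v, w) ∈ R → (u, w) ∈ R)

universe u v

section Aux
variable {A : Type v} (R : Set (FreeMonoid A × FreeMonoid A))

/-- letters whose singleton is a relation word -/
def LSet : Set A := {a | IsRelWord R (of a)}

open Classical in
noncomputable def rep (a : A) : A :=
  if h : ∃ b, b ∈ LSet R ∧ (presCon R).mk' (of b) = (presCon R).mk' (of a) then h.choose else a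


def BadP (a : A) : Prop :=
  ∃ w, IsRelWord R w ∧ (presCon R).mk' w = (presCon R).mk' (of a) ∧ ∀ c ∈ w, c ∉ LSet R

open Classical in
noncomputable def wit (a : A) : FreeMonoid A :=
  if h : BadP R a then h.choose else 1

def Keep : Set A := {a | a ∉ LSet R ∨ (¬ BadP R a ∧ rep R a = a)}

variable {R}

theorem rep_spec {a : A} (ha : a ∈ LSet R) :
    rep R a ∈ LSet R ∧ (presCon R).mk' (of (rep R a)) = (presCon R).mk' (of a) := by
  have h : ∃ b, b ∈ LSet R ∧ (presCon R).mk' (of b) = (presCon R).mk' (of a) := ⟨a, ha, rfl⟩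
  rw [rep, dif_pos h]
  exact h.choose_spec

theorem rep_congr {a b : A} (ha : a ∈ LSet R) (hb : b ∈ LSet R)
    (hab : (presCon R).mk' (of a) = (presCon R).mk' (of b)) : rep R a = rep R b := by
  have ha' : ∃ c, c ∈ LSet R ∧ (presCon R).mk' (of c) = (presCon R).mk' (of a) := ⟨a, ha, rfl⟩
  have hb' : ∃ c, c ∈ LSet R ∧ (presCon R).mk' (of c) = (presCon R).mk' (of b) := ⟨b, hb, rfl⟩
  rw [rep, rep, dif_pos ha', dif_pos hb']
  congr 1
  rw [hab]

theorem badP_congr {a b : A}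
    (hab : (presCon R).mk' (of a) = (presCon R).mk' (of b)) : BadP R a ↔ BadP R b := by
  unfold BadP
  rw [hab]

theorem wit_spec {a : A} (h : BadP R a) :
    IsRelWord R (wit R a) ∧ (presCon R).mk' (wit R a) = (presCon R).mk' (of a) ∧
      ∀ c ∈ wit R a, c ∉ LSet R := by
  rw [wit, dif_pos h]
  exact h.choose_spec

theorem rep_keep {a : A} (ha : a ∈ LSet R) (hb : ¬ BadP R a) : rep R a ∈ Keep R := by
  obtain ⟨h1, h2⟩ := rep_spec ha
  exact Or.inr ⟨fun hb' => hb ((badP_congr h2).mp hb'), rep_congr h1 ha h2⟩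

end Aux

section Aux2
variable {A : Type v} (R : Set (FreeMonoid A × FreeMonoid A))

/-- inclusion of the kept alphabet -/
def iot : FreeMonoid ↥(Keep R) →* FreeMonoid A := map Subtype.val

open Classical in
/-- projection onto the kept alphabet -/
noncomputable def proj : FreeMonoid A →* FreeMonoid ↥(Keep R) :=
  lift fun a => if h : a ∈ Keep R then of (⟨a, h⟩ : ↥(Keep R)) else 1

theorem proj_iot (w : FreeMonoid ↥(Keep R)) : proj R (iot R w) = w := by
  have : (proj R).comp (iot R) = MonoidHom.id _ := by
    apply hom_eq
    intro b
    simp [iot, proj, b.2]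
  calc proj R (iot R w) = ((proj R).comp (iot R)) w := rfl
  _ = w := by rw [this]; rfl

theorem iot_injective : Function.Injective (iot R) := by
  intro x y h
  have := congrArg (proj R) h
  rwa [proj_iot, proj_iot] at this

theorem iot_proj (w : FreeMonoid A) (hw : ∀ c ∈ w, c ∈ Keep R) : iot R (proj R w) = w := by
  induction w using FreeMonoid.inductionOn' with
  | one => simp
  | of_mul a w ih =>
    have ha : a ∈ Keep R := hw a (mem_mul.mpr (Or.inl mem_of_self))
    have hw' : ∀ c ∈ w, c ∈ Keep R := fun c hc => hw c (mem_mul.mpr (Or.inr hc))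
    rw [map_mul, map_mul, ih hw']
    congr 1
    simp [proj, ha, iot]

theorem mem_iot {c : A} {w : FreeMonoid ↥(Keep R)} (h : c ∈ iot R w) : c ∈ Keep R := by
  rw [iot, mem_map] at h
  obtain ⟨b, _, rfl⟩ := h
  exact b.2

open Classical in
/-- the substitution on letters -/
noncomputable def sig (a : A) : FreeMonoid A :=
  if a ∈ Keep R then of a else if BadP R a then wit R a else of (rep R a)

variable {R}

theorem sig_keep {a : A} : ∀ c ∈ sig R a, c ∈ Keep R := by
  intro c hc
  by_cases h1 : a ∈ Keep R
  · rw [sig, if_pos h1, mem_of] at hc; rwa [hc]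
  · by_cases h2 : BadP R a
    · rw [sig, if_neg h1, if_pos h2] at hc
      exact Or.inl ((wit_spec h2).2.2 c hc)
    · rw [sig, if_neg h1, if_neg h2, mem_of] at hc
      have ha : a ∈ LSet R := by
        by_contra ha
        exact h1 (Or.inl ha)
      rw [hc]
      exact rep_keep ha h2

theorem sig_equiv (a : A) : (presCon R).mk' (sig R a) = (presCon R).mk' (of a) := by
  by_cases h1 : a ∈ Keep R
  · rw [sig, if_pos h1]
  · by_cases h2 : BadP R a
    · rw [sig, if_neg h1, if_pos h2]
      exact (wit_spec h2).2.1
    · rw [sig, if_neg h1, if_neg h2]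
      have ha : a ∈ LSet R := by
        by_contra ha
        exact h1 (Or.inl ha)
      exact (rep_spec ha).2

theorem sig_of_keep {a : A} (h : a ∈ Keep R) : sig R a = of a := by
  rw [sig, if_pos h]

end Aux2

section Aux3
variable {A : Type v} {R : Set (FreeMonoid A × FreeMonoid A)} {m : ℕ}

theorem relword_ne_one (hso : SmallOverlapC R m) (hm : 2 ≤ m) {w : FreeMonoid A}
    (hw : IsRelWord R w) : w ≠ 1 := by
  intro h
  have := hso w hw [] (by simp) (by simp [h])
  simp at this
  omega

theorem relword_not_piece (hso : SmallOverlapC R m) (hm : 2 ≤ m) {w : FreeMonoid A}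
    (hw : IsRelWord R w) : ¬ IsPiece R w := by
  intro h
  have := hso w hw [w] (by simpa) (by simp)
  simp at this
  omega

theorem isFactor_of_mem {a : A} {w : FreeMonoid A} (h : a ∈ w) : IsFactor (of a) w := by
  obtain ⟨s, t, hst⟩ := List.append_of_mem (show a ∈ toList w from h)
  exact ⟨ofList s, ofList t, by
    change w = ofList (s ++ [a] ++ t)
    rw [show s ++ [a] ++ t = s ++ a :: t by simp, ← hst, ofList_toList]⟩

/-- a letter of `LSet` occurs only in its own singleton relation word -/
theorem mem_L_eq (hso : SmallOverlapC R m) (hm : 2 ≤ m) {a : A} (ha : a ∈ LSet R)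
    {w : FreeMonoid A} (hw : IsRelWord R w) (haw : a ∈ w) : w = of a := by
  by_contra hne
  refine relword_not_piece hso hm ha (Or.inr (Or.inl ⟨of a, w, ha, hw, ?_, ⟨1, 1, by simp⟩,
    isFactor_of_mem haw⟩))
  exact fun h => hne h.symm

/-- every relation word is a singleton from `LSet` or avoids `LSet` entirely -/
theorem relword_dichotomy (hso : SmallOverlapC R m) (hm : 2 ≤ m) {w : FreeMonoid A}
    (hw : IsRelWord R w) : (∃ a ∈ LSet R, w = of a) ∨ ∀ c ∈ w, c ∉ LSet R := by
  by_cases h : ∃ c ∈ w, c ∈ LSet R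
  · obtain ⟨c, hcw, hc⟩ := h
    exact Or.inl ⟨c, hc, mem_L_eq hso hm hc hw hcw⟩
  · push_neg at h
    exact Or.inr h

end Aux3

section Aux4
variable {A : Type v} (R : Set (FreeMonoid A × FreeMonoid A)) {m : ℕ}

/-- the rewriting homomorphism by the substitution `sig` -/
noncomputable def psi : FreeMonoid A →* FreeMonoid ↥(Keep R) :=
  (proj R).comp (lift (sig R))

/-- the new presentation over the kept alphabet -/
def SRel : Set (FreeMonoid ↥(Keep R) × FreeMonoid ↥(Keep R)) :=
  {p | IsRelWord R (iot R p.1) ∧ IsRelWord R (iot R p.2) ∧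
    (presCon R).mk' (iot R p.1) = (presCon R).mk' (iot R p.2)}

variable {R}

theorem sigword_keep (w : FreeMonoid A) : ∀ c ∈ lift (sig R) w, c ∈ Keep R := by
  induction w using FreeMonoid.inductionOn' with
  | one => intro c hc; exact absurd hc notMem_one
  | of_mul a w ih =>
    intro c hc
    rw [map_mul, lift_eval_of, mem_mul] at hc
    exact hc.elim (fun h => sig_keep c h) (fun h => ih c h)

theorem iot_psi (w : FreeMonoid A) : iot R (psi R w) = lift (sig R) w :=
  iot_proj R _ (sigword_keep w)

theorem sigword_equiv (w : FreeMonoid A) :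
    (presCon R).mk' (lift (sig R) w) = (presCon R).mk' w := by
  induction w using FreeMonoid.inductionOn' with
  | one => simp
  | of_mul a w ih =>
    rw [map_mul, lift_eval_of, map_mul, map_mul, ih, sig_equiv]

theorem iot_psi_equiv (w : FreeMonoid A) :
    (presCon R).mk' (iot R (psi R w)) = (presCon R).mk' w := by
  rw [iot_psi, sigword_equiv]

theorem psi_iot (w : FreeMonoid ↥(Keep R)) : psi R (iot R w) = w := by
  have : (psi R).comp (iot R) = MonoidHom.id _ := by
    apply hom_eq
    intro b
    show psi R (of b.1) = of b
    show proj R (lift (sig R) (of b.1)) = of b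
    rw [lift_eval_of, sig_of_keep b.2]
    simp [proj, b.2]
  calc psi R (iot R w) = ((psi R).comp (iot R)) w := rfl
  _ = w := by rw [this]; rfl

theorem sigword_eq_self {w : FreeMonoid A} (hw : ∀ c ∈ w, c ∉ LSet R) :
    lift (sig R) w = w := by
  induction w using FreeMonoid.inductionOn' with
  | one => simp
  | of_mul a w ih =>
    have ha : a ∈ Keep R := Or.inl (hw a (mem_mul.mpr (Or.inl mem_of_self)))
    rw [map_mul, lift_eval_of, sig_of_keep ha, ih fun c hc => hw c (mem_mul.mpr (Or.inr hc))]

theorem psi_relword (hso : SmallOverlapC R m) (hm : 2 ≤ m) {u : FreeMonoid A}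
    (hu : IsRelWord R u) : IsRelWord R (iot R (psi R u)) := by
  rw [iot_psi]
  rcases relword_dichotomy hso hm hu with ⟨a, ha, rfl⟩ | h
  · rw [lift_eval_of]
    by_cases h1 : a ∈ Keep R
    · rwa [sig_of_keep h1]
    · by_cases h2 : BadP R a
      · rw [sig, if_neg h1, if_pos h2]
        exact (wit_spec h2).1
      · rw [sig, if_neg h1, if_neg h2]
        exact (rep_spec ha).1
  · rwa [sigword_eq_self h]

theorem mem_SRel (hso : SmallOverlapC R m) (hm : 2 ≤ m) {u v : FreeMonoid A}
    (huv : (u, v) ∈ R) : (psi R u, psi R v) ∈ SRel R := by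
  have hu : IsRelWord R u := ⟨(u, v), huv, Or.inl rfl⟩
  have hv : IsRelWord R v := ⟨(u, v), huv, Or.inr rfl⟩
  refine ⟨psi_relword hso hm hu, psi_relword hso hm hv, ?_⟩
  rw [iot_psi_equiv, iot_psi_equiv]
  exact (Con.eq _).mpr (ConGen.Rel.of _ _ huv)

end Aux4

section Aux5
variable {A : Type v} {R : Set (FreeMonoid A × FreeMonoid A)} {m : ℕ}

theorem relword_SRel {w : FreeMonoid ↥(Keep R)} :
    IsRelWord (SRel R) w ↔ IsRelWord R (iot R w) := by
  constructor
  · rintro ⟨p, hp, hw | hw⟩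
    · rw [← hw]; exact hp.1
    · rw [← hw]; exact hp.2.1
  · intro h
    exact ⟨(w, w), ⟨h, h, rfl⟩, Or.inl rfl⟩

theorem equivPres_SRel : IsEquivPres (SRel R) := by
  refine ⟨fun w hw => ?_, fun u v huv => ?_, fun u v w huv hvw => ?_⟩
  · have := relword_SRel.mp hw
    exact ⟨this, this, rfl⟩
  · exact ⟨huv.2.1, huv.1, huv.2.2.symm⟩
  · exact ⟨huv.1, hvw.2.1, huv.2.2.trans hvw.2.2⟩

theorem isFactor_iot {u w : FreeMonoid ↥(Keep R)} (h : IsFactor u w) :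
    IsFactor (iot R u) (iot R w) := by
  obtain ⟨p, q, rfl⟩ := h
  exact ⟨iot R p, iot R q, by rw [map_mul, map_mul]⟩

theorem piece_iot {u : FreeMonoid ↥(Keep R)} (h : IsPiece (SRel R) u) :
    IsPiece R (iot R u) := by
  rcases h with rfl | ⟨w₁, w₂, h1, h2, hne, f1, f2⟩ | ⟨w, hw, p, q, p', q', e1, e2, hne⟩
  · exact Or.inl (map_one _)
  · exact Or.inr (Or.inl ⟨iot R w₁, iot R w₂, relword_SRel.mp h1, relword_SRel.mp h2,
      fun h => hne (iot_injective R h), isFactor_iot f1, isFactor_iot f2⟩)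
  · refine Or.inr (Or.inr ⟨iot R w, relword_SRel.mp hw, iot R p, iot R q, iot R p', iot R q',
      ?_, ?_, fun h => hne (iot_injective R h)⟩)
    · rw [e1, map_mul, map_mul]
    · rw [e2, map_mul, map_mul]

theorem smallOverlap_SRel (hso : SmallOverlapC R m) : SmallOverlapC (SRel R) m := by
  intro w hw l hl hprod
  have h1 : IsRelWord R (iot R w) := relword_SRel.mp hw
  have h2 : ∀ x ∈ l.map (iot R), IsPiece R x := by
    intro x hx
    rw [List.mem_map] at hx
    obtain ⟨y, hy, rfl⟩ := hx
    exact piece_iot (hl y hy)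
  have h3 : (l.map (iot R)).prod = iot R w := by
    rw [← hprod]
    exact (map_list_prod (iot R) l).symm
  have := hso _ h1 _ h2 h3
  rwa [List.length_map] at this

/-- key: any `SRel`-pair with one side a single letter is trivial -/
theorem SRel_of_eq (hso : SmallOverlapC R m) (hm : 2 ≤ m) {b : ↥(Keep R)}
    {x y : FreeMonoid ↥(Keep R)} (hxy : (x, y) ∈ SRel R) (hx : x = of b) : y = of b := by
  subst hx
  obtain ⟨h1, h2, h3⟩ := hxy
  have hio : iot R (of b) = of b.1 := rfl
  rw [hio] at h1 h3
  have hbL : b.1 ∈ LSet R := h1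
  have hbK : ¬ BadP R b.1 ∧ rep R b.1 = b.1 := by
    rcases b.2 with h | h
    · exact absurd hbL h
    · exact h
  rcases relword_dichotomy hso hm h2 with ⟨c, hc, hyc⟩ | hall
  · have hcK : c ∈ Keep R := by
      have : c ∈ iot R y := by rw [hyc]; exact mem_of_self
      exact mem_iot R this
    have hcrep : ¬ BadP R c ∧ rep R c = c := by
      rcases hcK with h | h
      · exact absurd hc h
      · exact h
    have hmk : (presCon R).mk' (of c) = (presCon R).mk' (of b.1) := by
      rw [← hyc, h3]
    have : c = b.1 := by
      rw [← hcrep.2, ← hbK.2]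
      exact rep_congr hc hbL hmk
    apply iot_injective R
    rw [hio, hyc, this]
  · exfalso
    exact hbK.1 ⟨iot R y, h2, h3.symm, hall⟩

theorem SRel_ne_one (hso : SmallOverlapC R m) (hm : 2 ≤ m)
    {x y : FreeMonoid ↥(Keep R)} (hxy : (x, y) ∈ SRel R) : x ≠ 1 := by
  intro h
  subst h
  exact relword_ne_one hso hm hxy.1 (map_one _)

end Aux5

section Aux6
variable {A : Type v} {R : Set (FreeMonoid A × FreeMonoid A)} {m : ℕ}

theorem fm_mul_eq_one_iff {B : Type*} {x y : FreeMonoid B} :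
    x * y = 1 ↔ x = 1 ∧ y = 1 := by
  constructor
  · intro h
    have hl : x.length + y.length = 0 := by rw [← length_mul, h, length_one]
    exact ⟨length_eq_zero.mp (by omega), length_eq_zero.mp (by omega)⟩
  · rintro ⟨rfl, rfl⟩; simp

theorem mul_eq_of_iff {B : Type*} {x y : FreeMonoid B} {c : B} :
    x * y = of c ↔ (x = 1 ∧ y = of c) ∨ (x = of c ∧ y = 1) := by
  constructor
  · intro h
    have hl : x.length + y.length = 1 := by
      rw [← length_mul, h, length_of]
    rcases Nat.eq_zero_or_pos x.length with h0 | h0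
    · have hx : x = 1 := length_eq_zero.mp h0
      subst hx
      rw [one_mul] at h
      exact Or.inl ⟨rfl, h⟩
    · have hy : y = 1 := length_eq_zero.mp (by omega)
      subst hy
      rw [mul_one] at h
      exact Or.inr ⟨h, rfl⟩
  · rintro (⟨rfl, rfl⟩ | ⟨rfl, rfl⟩) <;> simp

/-- the congruence pinning the class of a single letter -/
def pinCon {B : Type*} (b : B) : Con (FreeMonoid B) where
  r u v := (u = 1 ↔ v = 1) ∧ (u = of b ↔ v = of b)
  iseqv := ⟨fun _ => ⟨Iff.rfl, Iff.rfl⟩, fun h => ⟨h.1.symm, h.2.symm⟩,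
    fun h h' => ⟨h.1.trans h'.1, h.2.trans h'.2⟩⟩
  mul' := by
    rintro u₁ v₁ u₂ v₂ ⟨h11, h12⟩ ⟨h21, h22⟩
    constructor
    · simp only [fm_mul_eq_one_iff]
      rw [and_congr h11 h21]
    · simp only [mul_eq_of_iff]
      rw [or_congr (and_congr h11 h22) (and_congr h12 h21)]

theorem genMinimal_SRel (hso : SmallOverlapC R m) (hm : 2 ≤ m) :
    GeneratorMinimal (SRel R) := by
  intro b hb
  -- every element in the closure is the class of a word avoiding b
  have key : ∀ x ∈ Submonoid.closure {x : (presCon (SRel R)).Quotient |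
      ∃ c : ↥(Keep R), c ≠ b ∧ x = (presCon (SRel R)).mk' (of c)},
      ∃ u : FreeMonoid ↥(Keep R), (∀ c ∈ u, c ≠ b) ∧ (presCon (SRel R)).mk' u = x := by
    intro x hx
    induction hx using Submonoid.closure_induction with
    | mem x hx =>
      obtain ⟨c, hc, rfl⟩ := hx
      exact ⟨of c, fun d hd => by rwa [mem_of] at hd ▸ hc, rfl⟩
    | one => exact ⟨1, fun c hc => absurd hc notMem_one, map_one _⟩
    | mul x y _ _ ihx ihy =>
      obtain ⟨u, hu, rfl⟩ := ihx
      obtain ⟨v, hv, rfl⟩ := ihy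
      exact ⟨u * v, fun c hc => (mem_mul.mp hc).elim (hu c) (hv c), map_mul _ _ _⟩
  obtain ⟨u, hu, hmk⟩ := key _ hb
  -- the pin congruence shows u = of b
  have hle : presCon (SRel R) ≤ pinCon b := by
    apply Con.conGen_le.mpr
    rintro x y hxy
    constructor
    · constructor
      · intro h; exact absurd h (SRel_ne_one hso hm hxy)
      · intro h; exact absurd h (SRel_ne_one hso hm ⟨hxy.2.1, hxy.1, hxy.2.2.symm⟩)
    · constructor
      · intro h; exact SRel_of_eq hso hm hxy h
      · intro h; exact SRel_of_eq hso hm ⟨hxy.2.1, hxy.1, hxy.2.2.symm⟩ h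
  have : pinCon b u (of b) := hle ((Con.eq _).mp hmk)
  have hub : u = of b := this.2.mpr rfl
  exact hu b (hub ▸ mem_of_self) rfl

end Aux6

section Aux7
variable {A : Type v} {R : Set (FreeMonoid A × FreeMonoid A)} {m : ℕ}

noncomputable def quotIso (hso : SmallOverlapC R m) (hm : 2 ≤ m) :
    (presCon R).Quotient ≃* (presCon (SRel R)).Quotient := by
  have hF : presCon R ≤ Con.ker ((Con.mk' (presCon (SRel R))).comp (psi R)) := by
    apply Con.conGen_le.mpr
    intro x y hxy
    rw [Con.ker_rel]
    show (presCon (SRel R)).mk' (psi R x) = (presCon (SRel R)).mk' (psi R y)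
    exact (Con.eq _).mpr (ConGen.Rel.of _ _ (mem_SRel hso hm hxy))
  have hG : presCon (SRel R) ≤ Con.ker ((Con.mk' (presCon R)).comp (iot R)) := by
    apply Con.conGen_le.mpr
    intro x y hxy
    rw [Con.ker_rel]
    exact hxy.2.2
  refine
    { toFun := (presCon R).lift _ hF
      invFun := (presCon (SRel R)).lift _ hG
      left_inv := ?_
      right_inv := ?_
      map_mul' := map_mul _ }
  · intro x
    induction x using Con.induction_on with
    | H u =>
      rw [show ((u : (presCon R).Quotient)) = (presCon R).mk' u from rfl, Con.lift_mk',
        MonoidHom.comp_apply, Con.lift_mk', MonoidHom.comp_apply]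
      exact iot_psi_equiv u
  · intro x
    induction x using Con.induction_on with
    | H w =>
      rw [show ((w : (presCon (SRel R)).Quotient)) = (presCon (SRel R)).mk' w from rfl,
        Con.lift_mk', MonoidHom.comp_apply, Con.lift_mk', MonoidHom.comp_apply, psi_iot]

end Aux7


/-- **Proposition.** For `m ≥ 2`, every monoid admitting a C(m) presentation also admits
a generator-minimal C(m) equivalence presentation. -/
theorem statement4 {M : Type u} [Monoid M] (m : ℕ) (hm : 2 ≤ m)
    (h : ∃ (A : Type v) (R : Set (FreeMonoid A × FreeMonoid A)),
      SmallOverlapC R m ∧ Nonempty (M ≃* (presCon R).Quotient)) :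
    ∃ (B : Type v) (S : Set (FreeMonoid B × FreeMonoid B)),
      SmallOverlapC S m ∧ GeneratorMinimal S ∧ IsEquivPres S ∧
      Nonempty (M ≃* (presCon S).Quotient) := by
  obtain ⟨A, R, hso, ⟨e⟩⟩ := h
  exact ⟨↥(Keep R), SRel R, smallOverlap_SRel hso, genMinimal_SRel hso hm, equivPres_SRel,
    ⟨e.trans (quotIso hso hm)⟩⟩
end

section
/- Let m ≥ 2, let ⟨A|R⟩ be a presentation satisfying the condition C(m), let a ∈ A, and suppose R contains a relation of the form (a, w) or (w, a) with w ≠ a. Let â denote the set of all words w such that w ≠ a and (a, w) ∈ R or (w, a) ∈ R, let B = A∖{a}, and let S = (R ∖ {(a, w), (w, a) : w ∈ A*}) ∪ {(u, v) : u, v ∈ â}. Then: (i) the letter a does not occur in any word of â, so every word of â lies in B*; (ii) ⟨B|S⟩ satisfies the condition C(m); and (iii) the inclusion B* → A* of free monoids induces an isomorphism from the monoid presented by ⟨B|S⟩ onto the monoid presented by ⟨A|R⟩. -/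
open FreeMonoid

/-- The set `â` of words `w ≠ a` appearing opposite the one-letter relation word `a`. -/
def hatSet {A : Type*} (R : Set (FreeMonoid A × FreeMonoid A)) (a : A) :
    Set (FreeMonoid A) :=
  {w | w ≠ of a ∧ ((of a, w) ∈ R ∨ (w, of a) ∈ R)}

/-- The presentation `S = (R ∖ {(a,w),(w,a) : w}) ∪ (â × â)` over the alphabet
`B = A ∖ {a}`, obtained by pulling back along the inclusion `B* → A*`. -/
def delGenRel {A : Type*} (R : Set (FreeMonoid A × FreeMonoid A)) (a : A) :
    Set (FreeMonoid {b : A // b ≠ a} × FreeMonoid {b : A // b ≠ a}) :=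
  {p | (((FreeMonoid.map Subtype.val) p.1, (FreeMonoid.map Subtype.val) p.2) ∈ R ∧
          (FreeMonoid.map Subtype.val) p.1 ≠ of a ∧
          (FreeMonoid.map Subtype.val) p.2 ≠ of a) ∨
       ((FreeMonoid.map Subtype.val) p.1 ∈ hatSet R a ∧
          (FreeMonoid.map Subtype.val) p.2 ∈ hatSet R a)}

section Aux
variable {A : Type*} {a : A}

lemma emb_injective :
    Function.Injective (FreeMonoid.map (Subtype.val : {b : A // b ≠ a} → A)) := by
  intro u v h
  have h2 : u.toList.map Subtype.val = v.toList.map Subtype.val := congrArg toList h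
  have h3 := List.map_injective_iff.2 Subtype.val_injective h2
  exact congrArg ofList h3

lemma list_pull : ∀ l : List A, a ∉ l → ∃ m : List {b : A // b ≠ a}, m.map Subtype.val = l
  | [], _ => ⟨[], rfl⟩
  | x :: t, h => by
    have hx : x ≠ a := fun hxa => h (hxa ▸ (List.mem_cons_self : x ∈ x :: t))
    obtain ⟨m, hm⟩ := list_pull t (fun ht => h (List.mem_cons_of_mem _ ht))
    exact ⟨⟨x, hx⟩ :: m, by simp [hm]⟩

lemma exists_pull {w : FreeMonoid A} (hw : a ∉ w.toList) :
    ∃ u : FreeMonoid {b : A // b ≠ a}, FreeMonoid.map Subtype.val u = w := by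
  obtain ⟨m, hm⟩ := list_pull w.toList hw
  refine ⟨ofList m, ?_⟩
  have : (FreeMonoid.map Subtype.val (ofList m)).toList = w.toList := by
    rw [toList_map, toList_ofList, hm]
  exact congrArg ofList this

open Classical in
noncomputable def rsub (a : A) (w' : FreeMonoid {b : A // b ≠ a}) :
    FreeMonoid A →* FreeMonoid {b : A // b ≠ a} :=
  FreeMonoid.lift fun x => if h : x = a then w' else FreeMonoid.of ⟨x, h⟩

open Classical in
lemma rsub_of (w' : FreeMonoid {b : A // b ≠ a}) (x : A) :
    rsub a w' (of x) = if h : x = a then w' else FreeMonoid.of ⟨x, h⟩ := rfl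

lemma rsub_of_eq (w' : FreeMonoid {b : A // b ≠ a}) : rsub a w' (of a) = w' := by
  rw [rsub_of]; simp

lemma rsub_of_ne (w' : FreeMonoid {b : A // b ≠ a}) {x : A} (h : x ≠ a) :
    rsub a w' (of x) = FreeMonoid.of ⟨x, h⟩ := by
  rw [rsub_of, dif_neg h]

lemma rsub_emb (w' : FreeMonoid {b : A // b ≠ a}) (u : FreeMonoid {b : A // b ≠ a}) :
    rsub a w' (FreeMonoid.map Subtype.val u) = u := by
  induction u using FreeMonoid.inductionOn' with
  | one => simp
  | of_mul b v ih =>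
    rw [map_mul, map_of, map_mul, rsub_of_ne w' b.2, ih]

lemma emb_rsub (w' : FreeMonoid {b : A // b ≠ a}) {w : FreeMonoid A} (hw : a ∉ toList w) :
    FreeMonoid.map Subtype.val (rsub a w' w) = w := by
  induction w using FreeMonoid.inductionOn' with
  | one => simp
  | of_mul x v ih =>
    simp only [toList_mul, toList_of, List.mem_append, List.mem_cons, List.mem_singleton,
      List.not_mem_nil, or_false] at hw
    push_neg at hw
    rw [map_mul, rsub_of_ne w' (Ne.symm hw.1), map_mul, map_of, ih hw.2]

lemma presCon_base {R : Set (FreeMonoid A × FreeMonoid A)} {x y : FreeMonoid A}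
    (h : (x, y) ∈ R) : presCon R x y :=
  ConGen.Rel.of _ _ h

lemma rel_no_a {R : Set (FreeMonoid A × FreeMonoid A)} {m : ℕ} (hm : 2 ≤ m)
    (hC : SmallOverlapC R m) (haR : IsRelWord R (of a))
    {w : FreeMonoid A} (hw : IsRelWord R w) (hne : w ≠ of a) : a ∉ toList w := by
  intro hmem
  obtain ⟨s, t, hst⟩ := List.append_of_mem hmem
  have hfact : IsFactor (of a) w := by
    refine ⟨ofList s, ofList t, ?_⟩
    have : toList w = toList (ofList s * of a * ofList t) := by
      simp [toList_mul, hst]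
    exact congrArg ofList this
  have hpiece : IsPiece R (of a) :=
    Or.inr (Or.inl ⟨w, of a, hw, haR, hne, hfact, 1, 1, by simp⟩)
  have := hC (of a) haR [of a] (by intro x hx; simp at hx; rw [hx]; exact hpiece) (by simp)
  simp at this
  omega

end Aux


/-- **Elimination of a redundant generator from a C(m) presentation** (`m ≥ 2`):
(i) the letter `a` occurs in no word of `â` (hence those words lie in `B*`);
(ii) the presentation `⟨B|S⟩` satisfies C(m); and
(iii) the inclusion of free monoids `B* → A*` induces an isomorphism between the
monoids presented by `⟨B|S⟩` and `⟨A|R⟩`. -/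
theorem statement5 {A : Type*} (R : Set (FreeMonoid A × FreeMonoid A)) (m : ℕ)
    (hm : 2 ≤ m) (hC : SmallOverlapC R m) (a : A)
    (ha : ∃ w, w ∈ hatSet R a) :
    (∀ w ∈ hatSet R a, a ∉ FreeMonoid.toList w) ∧
    SmallOverlapC (delGenRel R a) m ∧
    ∃ e : (presCon (delGenRel R a)).Quotient ≃* (presCon R).Quotient,
      ∀ u : FreeMonoid {b : A // b ≠ a},
        e ((presCon (delGenRel R a)).mk' u) =
          (presCon R).mk' ((FreeMonoid.map Subtype.val) u) := by
  obtain ⟨w₀, hw₀⟩ := ha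
  have haR : IsRelWord R (of a) := by
    rcases hw₀.2 with h | h
    · exact ⟨_, h, Or.inl rfl⟩
    · exact ⟨_, h, Or.inr rfl⟩
  have hatRel : ∀ w ∈ hatSet R a, IsRelWord R w := by
    intro w hw
    rcases hw.2 with h | h
    · exact ⟨_, h, Or.inr rfl⟩
    · exact ⟨_, h, Or.inl rfl⟩
  have key : ∀ w, IsRelWord R w → w ≠ of a → a ∉ toList w :=
    fun w hw hne => rel_no_a hm hC haR hw hne
  have part1 : ∀ w ∈ hatSet R a, a ∉ FreeMonoid.toList w :=
    fun w hw => key w (hatRel w hw) hw.1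
  -- relation words of S map to relation words of R
  have relS : ∀ w', IsRelWord (delGenRel R a) w' →
      IsRelWord R (FreeMonoid.map Subtype.val w') := by
    rintro w' ⟨p, hp, hw'⟩
    rcases hp with ⟨hmem, _, _⟩ | ⟨h1, h2⟩
    · exact ⟨(FreeMonoid.map Subtype.val p.1, FreeMonoid.map Subtype.val p.2), hmem,
        by rcases hw' with h | h <;> simp [h]⟩
    · rcases hw' with h | h
      · exact h ▸ hatRel _ h1
      · exact h ▸ hatRel _ h2
  have factS : ∀ u w' : FreeMonoid {b : A // b ≠ a}, IsFactor u w' →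
      IsFactor (FreeMonoid.map Subtype.val u) (FreeMonoid.map Subtype.val w') := by
    rintro u w' ⟨p, q, rfl⟩
    exact ⟨FreeMonoid.map Subtype.val p, FreeMonoid.map Subtype.val q, by simp [map_mul]⟩
  have pieceS : ∀ u, IsPiece (delGenRel R a) u → IsPiece R (FreeMonoid.map Subtype.val u) := by
    rintro u (rfl | ⟨w₁, w₂, h1, h2, hne, f1, f2⟩ | ⟨w, hw, p, q, p', q', e1, e2, hpp⟩)
    · exact Or.inl (map_one _)
    · exact Or.inr (Or.inl ⟨_, _, relS _ h1, relS _ h2,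
        fun h => hne (emb_injective h), factS _ _ f1, factS _ _ f2⟩)
    · refine Or.inr (Or.inr ⟨_, relS _ hw, FreeMonoid.map Subtype.val p,
        FreeMonoid.map Subtype.val q, FreeMonoid.map Subtype.val p',
        FreeMonoid.map Subtype.val q', ?_, ?_, fun h => hpp (emb_injective h)⟩)
      · rw [e1]; simp [map_mul]
      · rw [e2]; simp [map_mul]
  have part2 : SmallOverlapC (delGenRel R a) m := by
    intro w hw l hl hprod
    have := hC _ (relS w hw) (l.map (FreeMonoid.map Subtype.val))
      (by
        intro x hx
        obtain ⟨y, hy, rfl⟩ := List.mem_map.1 hx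
        exact pieceS y (hl y hy))
      (by rw [← map_list_prod, hprod])
    simpa using this
  refine ⟨part1, part2, ?_⟩
  -- the isomorphism
  have ha0 : a ∉ toList w₀ := part1 w₀ hw₀
  obtain ⟨w₀', hw₀'⟩ := exists_pull ha0
  have hF : presCon (delGenRel R a) ≤
      Con.ker ((presCon R).mk'.comp (FreeMonoid.map Subtype.val)) := by
    refine (Con.conGen_le).2 ?_
    intro u v huv
    show (presCon R).mk' (FreeMonoid.map Subtype.val u)
        = (presCon R).mk' (FreeMonoid.map Subtype.val v)
    rcases huv with ⟨hmem, _, _⟩ | ⟨h1, h2⟩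
    · exact (Con.eq _).2 (presCon_base hmem)
    · have e1 : presCon R (FreeMonoid.map Subtype.val u) (of a) := by
        rcases h1.2 with h | h
        · exact (presCon R).symm (presCon_base h)
        · exact presCon_base h
      have e2 : presCon R (FreeMonoid.map Subtype.val v) (of a) := by
        rcases h2.2 with h | h
        · exact (presCon R).symm (presCon_base h)
        · exact presCon_base h
      exact (Con.eq _).2 ((presCon R).trans e1 ((presCon R).symm e2))
  have hG : presCon R ≤
      Con.ker ((presCon (delGenRel R a)).mk'.comp (rsub a w₀')) := by
    refine (Con.conGen_le).2 ?_
    intro u v huv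
    show (presCon (delGenRel R a)).mk' (rsub a w₀' u)
        = (presCon (delGenRel R a)).mk' (rsub a w₀' v)
    have hw₀hat : FreeMonoid.map Subtype.val w₀' ∈ hatSet R a := hw₀' ▸ hw₀
    by_cases hu : u = of a <;> by_cases hv : v = of a
    · subst hu; subst hv; rfl
    · subst hu
      have hvhat : v ∈ hatSet R a := ⟨hv, Or.inl huv⟩
      have hav : a ∉ toList v := part1 v hvhat
      have hrv : FreeMonoid.map Subtype.val (rsub a w₀' v) = v := emb_rsub w₀' hav
      have hmem : (rsub a w₀' (of a), rsub a w₀' v) ∈ delGenRel R a := by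
        refine Or.inr ⟨?_, ?_⟩
        · rw [rsub_of_eq]; exact hw₀hat
        · rw [hrv]; exact hvhat
      exact (Con.eq _).2 (presCon_base hmem)
    · subst hv
      have huhat : u ∈ hatSet R a := ⟨hu, Or.inr huv⟩
      have hau : a ∉ toList u := part1 u huhat
      have hru : FreeMonoid.map Subtype.val (rsub a w₀' u) = u := emb_rsub w₀' hau
      have hmem : (rsub a w₀' u, rsub a w₀' (of a)) ∈ delGenRel R a := by
        refine Or.inr ⟨?_, ?_⟩
        · rw [hru]; exact huhat
        · rw [rsub_of_eq]; exact hw₀hat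
      exact (Con.eq _).2 (presCon_base hmem)
    · have hau : a ∉ toList u := key u ⟨(u, v), huv, Or.inl rfl⟩ hu
      have hav : a ∉ toList v := key v ⟨(u, v), huv, Or.inr rfl⟩ hv
      have hru : FreeMonoid.map Subtype.val (rsub a w₀' u) = u := emb_rsub w₀' hau
      have hrv : FreeMonoid.map Subtype.val (rsub a w₀' v) = v := emb_rsub w₀' hav
      have hmem : (rsub a w₀' u, rsub a w₀' v) ∈ delGenRel R a := by
        refine Or.inl ⟨?_, ?_, ?_⟩
        · rw [hru, hrv]; exact huv
        · rw [hru]; exact hu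
        · rw [hrv]; exact hv
      exact (Con.eq _).2 (presCon_base hmem)
  have keyrel : ∀ u : FreeMonoid A,
      presCon R (FreeMonoid.map Subtype.val (rsub a w₀' u)) u := by
    intro u
    induction u using FreeMonoid.inductionOn' with
    | one => simpa using (presCon R).refl 1
    | of_mul x v ih =>
      rw [map_mul, map_mul]
      refine (presCon R).mul ?_ ih
      by_cases hx : x = a
      · subst hx
        rw [rsub_of_eq, hw₀']
        rcases hw₀.2 with h | h
        · exact (presCon R).symm (presCon_base h)
        · exact presCon_base h
      · rw [rsub_of_ne w₀' hx, map_of]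
        exact (presCon R).refl _
  refine ⟨{ toFun := Con.lift _ ((presCon R).mk'.comp (FreeMonoid.map Subtype.val)) hF,
            invFun := Con.lift _ ((presCon (delGenRel R a)).mk'.comp (rsub a w₀')) hG,
            left_inv := ?_, right_inv := ?_,
            map_mul' := fun x y => map_mul _ x y }, ?_⟩
  · intro x
    obtain ⟨u, rfl⟩ := Con.mk'_surjective x
    rw [Con.lift_mk', MonoidHom.comp_apply, Con.lift_mk', MonoidHom.comp_apply, rsub_emb]
  · intro x
    obtain ⟨u, rfl⟩ := Con.mk'_surjective x
    rw [Con.lift_mk', MonoidHom.comp_apply, Con.lift_mk', MonoidHom.comp_apply]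
    exact (Con.eq _).2 (keyrel u)
  · intro u
    simp only [MulEquiv.coe_mk, Equiv.coe_fn_mk]
    rw [Con.lift_mk', MonoidHom.comp_apply]
end

section
/- Let ⟨A|R⟩ be a presentation satisfying the condition C(4). Suppose w = XYZw' where XYZ is a relation word with maximal piece prefix X and middle word Y, XY is a clean overlap prefix of w, and p is any piece. Then ρ(pw') < ρ(w). -/
open FreeMonoid

/-- `X` is the maximal piece prefix of the word `W`. -/
def IsMaxPiecePrefix {A : Type*} (R : Set (FreeMonoid A × FreeMonoid A))
    (W X : FreeMonoid A) : Prop :=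
  IsPiece R X ∧ (∃ t, X * t = W) ∧
    ∀ X', IsPiece R X' → (∃ t, X' * t = W) → X'.length ≤ X.length

/-- `Z` is the maximal piece suffix of the word `W`. -/
def IsMaxPieceSuffix {A : Type*} (R : Set (FreeMonoid A × FreeMonoid A))
    (W Z : FreeMonoid A) : Prop :=
  IsPiece R Z ∧ (∃ t, t * Z = W) ∧
    ∀ Z', IsPiece R Z' → (∃ t, t * Z' = W) → Z'.length ≤ Z.length

/-- `X * Y * Z` is a relation word with maximal piece prefix `X`, (nonempty) middle
word `Y` and maximal piece suffix `Z`. -/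
def MiddleFact {A : Type*} (R : Set (FreeMonoid A × FreeMonoid A))
    (X Y Z : FreeMonoid A) : Prop :=
  IsRelWord R (X * Y * Z) ∧ IsMaxPiecePrefix R (X * Y * Z) X ∧
    IsMaxPieceSuffix R (X * Y * Z) Z ∧ Y ≠ 1

/-- `a * X * Y` is a relation prefix of `u`, where `X` and `Y` are the maximal piece
prefix and middle word of some relation word `X * Y * Z`. -/
def IsRelationPrefix {A : Type*} (R : Set (FreeMonoid A × FreeMonoid A))
    (u a X Y : FreeMonoid A) : Prop :=
  (∃ t, a * X * Y * t = u) ∧ ∃ Z, MiddleFact R X Y Z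

/-- The relation prefix `a * X * Y` of `u` is clean: `u` has no prefix
`a * X * Y' * X₁ * Y₁` with `Y'` a proper nonempty prefix of `Y` and `X₁`, `Y₁` the
maximal piece prefix and middle word of some relation word. -/
def IsCleanRelationPrefix {A : Type*} (R : Set (FreeMonoid A × FreeMonoid A))
    (u a X Y : FreeMonoid A) : Prop :=
  IsRelationPrefix R u a X Y ∧
  ¬ ∃ Y' X₁ Y₁ : FreeMonoid A, Y' ≠ 1 ∧ Y' ≠ Y ∧ (∃ t, Y' * t = Y) ∧
      (∃ Z₁, MiddleFact R X₁ Y₁ Z₁) ∧ (∃ t, a * X * Y' * X₁ * Y₁ * t = u)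

/-- `p` is an overlap prefix of `u`: a relation prefix admitting a factorisation
`b * X₁ * Y₁' * ⋯ * Xₙ₋₁ * Yₙ₋₁' * Xₙ * Yₙ` (each `Xᵢ`, `Yᵢ` the maximal piece prefix
and middle word of a relation word, each `Yᵢ'` a proper nonempty prefix of `Yᵢ`), such
that `p` has no factor of the form `X₀ * Y₀` beginning before the end of `b`. -/
def IsOverlapPrefix {A : Type*} (R : Set (FreeMonoid A × FreeMonoid A))
    (u p : FreeMonoid A) : Prop :=
  (∃ t, p * t = u) ∧
  ∃ (b : FreeMonoid A) (pairs : List (FreeMonoid A × FreeMonoid A))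
    (Xn Yn : FreeMonoid A),
    p = b * (pairs.map fun q => q.1 * q.2).prod * Xn * Yn ∧
    (∃ Zn, MiddleFact R Xn Yn Zn) ∧
    (∀ q ∈ pairs, ∃ Y : FreeMonoid A,
      (∃ Z, MiddleFact R q.1 Y Z) ∧ q.2 ≠ 1 ∧ q.2 ≠ Y ∧ ∃ t, q.2 * t = Y) ∧
    ¬ ∃ s t X₀ Y₀ : FreeMonoid A, (∃ Z₀, MiddleFact R X₀ Y₀ Z₀) ∧
        p = s * (X₀ * Y₀) * t ∧ s.length < b.length

/-- `p` is a clean overlap prefix of `u`. -/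
def IsCleanOverlapPrefix {A : Type*} (R : Set (FreeMonoid A × FreeMonoid A))
    (u p : FreeMonoid A) : Prop :=
  IsOverlapPrefix R u p ∧ ∃ a X Y, p = a * X * Y ∧ IsCleanRelationPrefix R u a X Y

open Classical in
/-- The induction parameter `ρ`: `ρ(w) = -1` if `w` has no clean overlap prefix, and
otherwise `ρ(w)` is the length of the suffix of `w` following its clean overlap
prefix. -/
noncomputable def rho {A : Type*} (R : Set (FreeMonoid A × FreeMonoid A))
    (w : FreeMonoid A) : ℤ :=
  if h : ∃ p, IsCleanOverlapPrefix R w p then (w.length : ℤ) - (h.choose.length : ℤ)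
  else -1


section Aux

variable {A : Type*} {R : Set (FreeMonoid A × FreeMonoid A)}

/-- Prefix relation on the free monoid. -/
def FPre (a b : FreeMonoid A) : Prop := ∃ t, a * t = b

lemma fpre_iff {a b : FreeMonoid A} : FPre a b ↔ a.toList <+: b.toList := by
  constructor
  · rintro ⟨t, rfl⟩; exact ⟨t.toList, rfl⟩
  · rintro ⟨u, hu⟩; exact ⟨FreeMonoid.ofList u, hu⟩

lemma fpre_trans {a b c : FreeMonoid A} (h1 : FPre a b) (h2 : FPre b c) : FPre a c := by
  obtain ⟨t, rfl⟩ := h1; obtain ⟨s, rfl⟩ := h2; exact ⟨t * s, (mul_assoc a t s).symm⟩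

lemma fpre_length {a b : FreeMonoid A} (h : FPre a b) : a.length ≤ b.length := by
  obtain ⟨t, rfl⟩ := h; rw [FreeMonoid.length_mul]; omega

lemma fpre_of_le {a b c : FreeMonoid A} (h1 : FPre a c) (h2 : FPre b c)
    (h : a.length ≤ b.length) : FPre a b := by
  rw [fpre_iff] at *
  exact List.prefix_of_prefix_length_le h1 h2 h

lemma fpre_cancel_left {a b c : FreeMonoid A} (h : FPre (a * b) (a * c)) : FPre b c := by
  obtain ⟨t, ht⟩ := h
  rw [mul_assoc] at ht
  exact ⟨t, mul_left_cancel ht⟩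

lemma fpre_mul_left {a b c : FreeMonoid A} (h : FPre b c) : FPre (a * b) (a * c) := by
  obtain ⟨t, rfl⟩ := h; exact ⟨t, mul_assoc a b t⟩

lemma fpre_eq {a b : FreeMonoid A} (h : FPre a b) (hl : b.length ≤ a.length) : a = b := by
  obtain ⟨t, rfl⟩ := h
  rw [FreeMonoid.length_mul] at hl
  have ht : t = 1 := FreeMonoid.length_eq_zero.mp (by omega)
  rw [ht, mul_one]

lemma flen_pos {a : FreeMonoid A} (h : a ≠ 1) : 0 < a.length := by
  rcases Nat.eq_zero_or_pos a.length with h0 | h0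
  · exact absurd (FreeMonoid.length_eq_zero.mp h0) h
  · exact h0

lemma isPiece_of_factor {p u : FreeMonoid A} (hp : IsPiece R p) (hf : IsFactor u p) :
    IsPiece R u := by
  obtain ⟨s, t, rfl⟩ := hf
  rcases hp with h1 | ⟨w₁, w₂, hw₁, hw₂, hne, ⟨p₁, q₁, he₁⟩, ⟨p₂, q₂, he₂⟩⟩ |
      ⟨w, hw, p₁, q₁, p₂, q₂, he₁, he₂, hne⟩
  · left
    have h2 : (s * u * t).length = 0 := by rw [h1]; rfl
    rw [FreeMonoid.length_mul, FreeMonoid.length_mul] at h2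
    exact FreeMonoid.length_eq_zero.mp (by omega)
  · refine Or.inr (Or.inl ⟨w₁, w₂, hw₁, hw₂, hne, ⟨p₁ * s, t * q₁, ?_⟩,
      ⟨p₂ * s, t * q₂, ?_⟩⟩)
    · rw [he₁]; simp [mul_assoc]
    · rw [he₂]; simp [mul_assoc]
  · refine Or.inr (Or.inr ⟨w, hw, p₁ * s, t * q₁, p₂ * s, t * q₂, ?_, ?_,
      fun h => hne (mul_right_cancel h)⟩)
    · rw [he₁]; simp [mul_assoc]
    · rw [he₂]; simp [mul_assoc]

lemma piece_two_occ {W W' u f v u' v' : FreeMonoid A} (hW : IsRelWord R W)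
    (hW' : IsRelWord R W') (h1 : W = u * f * v) (h2 : W' = u' * f * v')
    (hne : W ≠ W' ∨ u ≠ u') : IsPiece R f := by
  by_cases hWW : W = W'
  · rcases hne with hne | hne
    · exact absurd hWW hne
    · exact Or.inr (Or.inr ⟨W, hW, u, v, u', v', h1, by rw [hWW]; exact h2, hne⟩)
  · exact Or.inr (Or.inl ⟨W, W', hW, hW', hWW, ⟨u, v, h1⟩, ⟨u', v', h2⟩⟩)

/-- Core impossibility: a chain of at least two chunks starting at the beginning of a
word of the form `X * Y * Z * w'`. -/
lemma core {X Y Z w' x₁ y₁ Y₁ Z₁ x₂ y₂ Y₂ Z₂ : FreeMonoid A}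
    (hMF : MiddleFact R X Y Z)
    (h1 : MiddleFact R x₁ Y₁ Z₁) (hy₁ : y₁ ≠ 1) (hy₁p : y₁ ≠ Y₁) (hy₁pre : FPre y₁ Y₁)
    (h2 : MiddleFact R x₂ Y₂ Z₂) (hy₂ : y₂ ≠ 1) (hy₂pre : FPre y₂ Y₂)
    (hpre : FPre (x₁ * y₁ * (x₂ * y₂)) (X * Y * Z * w')) : False := by
  have hYpos : 0 < Y.length := flen_pos hMF.2.2.2
  have hy₁pos : 0 < y₁.length := flen_pos hy₁
  have hy₂pos : 0 < y₂.length := flen_pos hy₂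
  have hy₁lt : y₁.length < Y₁.length := by
    rcases lt_or_ge y₁.length Y₁.length with h | h
    · exact h
    · exact absurd (fpre_eq hy₁pre h) hy₁p
  have pW : FPre (X * Y * Z) (X * Y * Z * w') := ⟨w', rfl⟩
  have pu₂ : FPre (x₁ * y₁ * (x₂ * y₂)) (X * Y * Z * w') := hpre
  have pu₁ : FPre (x₁ * y₁) (X * Y * Z * w') :=
    fpre_trans ⟨x₂ * y₂, rfl⟩ pu₂
  have pm₂ : FPre (x₁ * y₁ * x₂) (X * Y * Z * w') :=
    fpre_trans ⟨y₂, by rw [mul_assoc]⟩ pu₂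
  -- abbreviations for lengths
  rcases le_or_gt (X * Y * Z).length (x₁ * y₁).length with hA | hB
  · -- Case A : chunk 1 reaches past the end of X*Y*Z
    rcases le_or_gt (X * Y * Z).length x₁.length with hA1 | hA2
    · -- X*Y*Z is a factor of the piece x₁
      have px₁ : FPre x₁ (X * Y * Z * w') := fpre_trans ⟨y₁, rfl⟩ pu₁
      obtain ⟨t, ht⟩ := fpre_of_le pW px₁ hA1
      have hWpiece : IsPiece R (X * Y * Z) :=
        isPiece_of_factor h1.2.1.1 ⟨1, t, by rw [one_mul, ht]⟩
      have := hMF.2.2.1.2.2 (X * Y * Z) hWpiece ⟨1, one_mul _⟩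
      rw [FreeMonoid.length_mul, FreeMonoid.length_mul] at this
      omega
    · -- |x₁| < |XYZ| ≤ |x₁ y₁|
      have hWu₁ : FPre (X * Y * Z) (x₁ * y₁) := fpre_of_le pW pu₁ hA
      have hu₁R₁ : FPre (x₁ * y₁) (x₁ * Y₁ * Z₁) :=
        fpre_trans (fpre_mul_left hy₁pre) ⟨Z₁, rfl⟩
      obtain ⟨s, hs⟩ := fpre_trans hWu₁ hu₁R₁
      by_cases hRR : X * Y * Z = x₁ * Y₁ * Z₁
      · have hl1 : (x₁ * y₁).length ≤ (x₁ * Y₁ * Z₁).length := fpre_length hu₁R₁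
        have hl2 := congrArg FreeMonoid.length hRR
        simp only [FreeMonoid.length_mul] at hl1 hl2 hA hA2
        omega
      · have hWpiece : IsPiece R (X * Y * Z) :=
          piece_two_occ hMF.1 h1.1 (by rw [one_mul, mul_one])
            (show x₁ * Y₁ * Z₁ = 1 * (X * Y * Z) * s by rw [one_mul, hs]) (Or.inl hRR)
        have := h1.2.1.2.2 (X * Y * Z) hWpiece ⟨s, hs⟩
        simp only [FreeMonoid.length_mul] at this hA2
        omega
  · -- Case B : |x₁ y₁| < |XYZ|
    rcases le_or_gt (x₁ * y₁ * (x₂ * y₂)).length (X * Y * Z).length with hB1 | hB2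
    · -- chunk 2 lies inside X*Y*Z
      obtain ⟨c, hc⟩ := fpre_of_le pu₂ pW hB1
      obtain ⟨s₂, hs₂⟩ := hy₂pre
      have hfpiece : IsPiece R (x₂ * y₂) :=
        piece_two_occ hMF.1 h2.1 (by rw [← hc])
          (show x₂ * Y₂ * Z₂ = 1 * (x₂ * y₂) * (s₂ * Z₂) by
            rw [one_mul, ← hs₂]; simp [mul_assoc]) 
          (Or.inr (by
            intro h
            have := congrArg FreeMonoid.length h
            simp only [FreeMonoid.length_mul] at this
            have : (1 : FreeMonoid A).length = 0 := rfl
            omega))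
      have := h2.2.1.2.2 (x₂ * y₂) hfpiece ⟨s₂ * Z₂, by rw [← hs₂]; simp [mul_assoc]⟩
      simp only [FreeMonoid.length_mul] at this
      omega
    · -- chunk 2 straddles the end of X*Y*Z
      have hWu₂ : FPre (X * Y * Z) (x₁ * y₁ * (x₂ * y₂)) := fpre_of_le pW pu₂ (le_of_lt hB2)
      obtain ⟨g, hg⟩ := fpre_of_le pu₁ pW (le_of_lt hB)
      rcases le_or_gt (X * Y * Z).length (x₁ * y₁ * x₂).length with hB2a | hB2b
      · -- the gap g is a factor of the piece x₂
        have hWm₂ : FPre (X * Y * Z) (x₁ * y₁ * x₂) := fpre_of_le pW pm₂ hB2a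
        have gpre : FPre g x₂ := fpre_cancel_left (a := x₁ * y₁) (by rw [hg]; exact hWm₂)
        obtain ⟨d, hd⟩ := gpre
        have gpiece : IsPiece R g :=
          isPiece_of_factor h2.2.1.1 ⟨1, d, by rw [one_mul, hd]⟩
        have hgZ := hMF.2.2.1.2.2 g gpiece ⟨x₁ * y₁, hg⟩
        have hglen : (x₁ * y₁).length + g.length = (X * Y * Z).length := by
          have := congrArg FreeMonoid.length hg
          rw [FreeMonoid.length_mul] at this
          omega
        by_cases hcase : (x₁ * y₁).length < (X * Y).length
        · simp only [FreeMonoid.length_mul] at hglen hcase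
          omega
        · -- chunk 1 lies inside X*Y*Z starting at position 0
          obtain ⟨s₁, hs₁⟩ := hy₁pre
          by_cases hRR : X * Y * Z = x₁ * Y₁ * Z₁
          · -- same relation word: x₁ and X have the same length, and so do Z₁ and Z
            have hx₁X : x₁.length ≤ X.length := by
              apply hMF.2.1.2.2 x₁ h1.2.1.1
              obtain ⟨t, ht⟩ := h1.2.1.2.1
              exact ⟨t, by rw [ht, hRR]⟩
            have hXx₁ : X.length ≤ x₁.length := by
              apply h1.2.1.2.2 X hMF.2.1.1
              obtain ⟨t, ht⟩ := hMF.2.1.2.1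
              exact ⟨t, by rw [ht, ← hRR]⟩
            have hZ₁Z : Z₁.length ≤ Z.length := by
              apply hMF.2.2.1.2.2 Z₁ h1.2.2.1.1
              obtain ⟨t, ht⟩ := h1.2.2.1.2.1
              exact ⟨t, by rw [ht, hRR]⟩
            have hZZ₁ : Z.length ≤ Z₁.length := by
              apply h1.2.2.1.2.2 Z hMF.2.2.1.1
              obtain ⟨t, ht⟩ := hMF.2.2.1.2.1
              exact ⟨t, by rw [ht, ← hRR]⟩
            have hlen := congrArg FreeMonoid.length hRR
            simp only [FreeMonoid.length_mul] at hlen hcase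
            omega
          · have hchunk1piece : IsPiece R (x₁ * y₁) :=
              piece_two_occ hMF.1 h1.1
                (show X * Y * Z = 1 * (x₁ * y₁) * g by rw [one_mul, hg])
                (show x₁ * Y₁ * Z₁ = 1 * (x₁ * y₁) * (s₁ * Z₁) by
                  rw [one_mul, ← hs₁]; simp [mul_assoc])
                (Or.inl hRR)
            have := h1.2.1.2.2 (x₁ * y₁) hchunk1piece
              ⟨s₁ * Z₁, by rw [← hs₁]; simp [mul_assoc]⟩
            simp only [FreeMonoid.length_mul] at this
            omega
      · -- |x₁ y₁ x₂| < |XYZ| < |x₁ y₁ x₂ y₂| : the gap properly extends x₂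
        have gpre : FPre g (x₂ * y₂) :=
          fpre_cancel_left (a := x₁ * y₁) (by rw [hg]; exact hWu₂)
        obtain ⟨s₂, hs₂⟩ := hy₂pre
        obtain ⟨e, he⟩ := fpre_trans gpre
          (⟨s₂ * Z₂, by rw [← hs₂]; simp [mul_assoc]⟩ : FPre (x₂ * y₂) (x₂ * Y₂ * Z₂))
        have gpiece : IsPiece R g :=
          piece_two_occ hMF.1 h2.1
            (show X * Y * Z = (x₁ * y₁) * g * 1 by rw [mul_one, hg])
            (show x₂ * Y₂ * Z₂ = 1 * g * e by rw [one_mul, he])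
            (Or.inr (by
              intro h
              have := congrArg FreeMonoid.length h
              simp only [FreeMonoid.length_mul] at this
              have h1' : (1 : FreeMonoid A).length = 0 := rfl
              omega))
        have := h2.2.1.2.2 g gpiece ⟨e, he⟩
        have hglen : (x₁ * y₁).length + g.length = (X * Y * Z).length := by
          have := congrArg FreeMonoid.length hg
          rw [FreeMonoid.length_mul] at this
          omega
        simp only [FreeMonoid.length_mul] at hB2b this hglen
        omega

/-- Edge impossibility: a single-chunk overlap prefix longer than `X*Y*Z`. -/
lemma edge {X Y Z w' Xn Yn Zn : FreeMonoid A}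
    (hMF : MiddleFact R X Y Z) (hn : MiddleFact R Xn Yn Zn)
    (hpre : FPre (Xn * Yn) (X * Y * Z * w'))
    (hlen : (X * Y * Z).length < (Xn * Yn).length) : False := by
  have hYpos : 0 < Y.length := flen_pos hMF.2.2.2
  have pW : FPre (X * Y * Z) (X * Y * Z * w') := ⟨w', rfl⟩
  rcases le_or_gt (X * Y * Z).length Xn.length with h | h
  · have pXn : FPre Xn (X * Y * Z * w') := fpre_trans ⟨Yn, rfl⟩ hpre
    obtain ⟨t, ht⟩ := fpre_of_le pW pXn h
    have hWpiece : IsPiece R (X * Y * Z) :=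
      isPiece_of_factor hn.2.1.1 ⟨1, t, by rw [one_mul, ht]⟩
    have := hMF.2.2.1.2.2 (X * Y * Z) hWpiece ⟨1, one_mul _⟩
    rw [FreeMonoid.length_mul, FreeMonoid.length_mul] at this
    omega
  · have hWq : FPre (X * Y * Z) (Xn * Yn) := fpre_of_le pW hpre (le_of_lt hlen)
    obtain ⟨s, hs⟩ := fpre_trans hWq (⟨Zn, rfl⟩ : FPre (Xn * Yn) (Xn * Yn * Zn))
    by_cases hRR : X * Y * Z = Xn * Yn * Zn
    · have h1 : (Xn * Yn).length ≤ (Xn * Yn * Zn).length := by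
        rw [FreeMonoid.length_mul (Xn * Yn) Zn]; omega
      have h2 := congrArg FreeMonoid.length hRR
      omega
    · have hWpiece : IsPiece R (X * Y * Z) :=
        piece_two_occ hMF.1 hn.1 (by rw [one_mul, mul_one])
          (show Xn * Yn * Zn = 1 * (X * Y * Z) * s by rw [one_mul, hs]) (Or.inl hRR)
      have := hn.2.1.2.2 (X * Y * Z) hWpiece ⟨s, hs⟩
      omega

/-- Any clean overlap prefix of `X * Y * Z * w'` is no longer than `X * Y * Z`,
provided `X * Y * Z` has a middle factorisation. -/
lemma lemU {X Y Z w' q' : FreeMonoid A} (hMF : MiddleFact R X Y Z)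
    (hq : IsCleanOverlapPrefix R (X * Y * Z * w') q') :
    q'.length ≤ (X * Y * Z).length := by
  by_contra hlen
  push_neg at hlen
  obtain ⟨⟨⟨t, ht⟩, b, pairs, Xn, Yn, heq, ⟨Zn, hZn⟩, hpairs, hnof⟩, -⟩ := hq
  have pq : FPre q' (X * Y * Z * w') := ⟨t, ht⟩
  have pXY : FPre (X * Y) (X * Y * Z * w') := ⟨Z * w', by simp [mul_assoc]⟩
  have hXYlen : (X * Y).length ≤ q'.length := by
    have h1 : (X * Y).length ≤ (X * Y * Z).length := by
      rw [FreeMonoid.length_mul (X * Y) Z]; omega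
    omega
  obtain ⟨t₀, ht₀⟩ := fpre_of_le pXY pq hXYlen
  have hb : b = 1 := by
    by_contra hb1
    exact hnof ⟨1, t₀, X, Y, ⟨Z, hMF⟩, by rw [one_mul, ht₀],
      by
        have h1 : (1 : FreeMonoid A).length = 0 := rfl
        have := flen_pos hb1
        omega⟩
  subst hb
  rw [one_mul] at heq
  match pairs, hpairs with
  | [], _ =>
    simp only [List.map_nil, List.prod_nil, one_mul] at heq
    exact edge hMF hZn (heq ▸ pq) (heq ▸ hlen)
  | (x₁, y₁) :: rest, hpairs =>
    obtain ⟨Y₁, ⟨Z₁, h1⟩, hy₁, hy₁p, hy₁pre⟩ := hpairs (x₁, y₁) List.mem_cons_self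
    match rest, hpairs with
    | [], _ =>
      simp only [List.map_cons, List.map_nil, List.prod_cons, List.prod_nil, mul_one] at heq
      have hrefl : FPre Yn Yn := ⟨1, mul_one Yn⟩
      have hpre2 : FPre (x₁ * y₁ * (Xn * Yn)) (X * Y * Z * w') :=
        fpre_trans ⟨1, by rw [mul_one, heq]; simp [mul_assoc]⟩ pq
      exact core (w' := w') hMF h1 hy₁ hy₁p hy₁pre hZn hZn.2.2.2 hrefl hpre2
    | (x₂, y₂) :: rest', hpairs =>
      obtain ⟨Y₂, ⟨Z₂, h2⟩, hy₂, hy₂p, hy₂pre⟩ :=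
        hpairs (x₂, y₂) (List.mem_cons_of_mem _ List.mem_cons_self)
      refine core (w' := w') hMF h1 hy₁ hy₁p hy₁pre h2 hy₂ hy₂pre ?_
      refine fpre_trans ?_ pq
      exact ⟨(rest'.map fun q => q.1 * q.2).prod * Xn * Yn, by rw [heq]; simp [mul_assoc]⟩

/-- Any clean overlap prefix of `p * w'` (with `p` a piece) is strictly longer
than `p`, under C(4). -/
lemma lemV {p w' q : FreeMonoid A} (hC : SmallOverlapC R 4) (hp : IsPiece R p)
    (hq : IsCleanOverlapPrefix R (p * w') q) : p.length < q.length := by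
  by_contra h
  push_neg at h
  obtain ⟨hop, a, X', Y', heq, ⟨⟨t, ht⟩, Z', hMF'⟩, -⟩ := hq
  have hqpre : FPre (a * X' * Y') p :=
    fpre_of_le ⟨t, ht⟩ ⟨w', rfl⟩ (by rw [← heq]; exact h)
  obtain ⟨d, hd⟩ := hqpre
  have hfac : IsFactor (X' * Y') p := ⟨a, d, by rw [← hd]; simp [mul_assoc]⟩
  have hpiece : IsPiece R (X' * Y') := isPiece_of_factor hp hfac
  have h4 := hC (X' * Y' * Z') hMF'.1 [X' * Y', Z']
    (by
      rintro x hx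
      simp only [List.mem_cons, List.not_mem_nil, or_false] at hx
      rcases hx with rfl | rfl
      · exact hpiece
      · exact hMF'.2.2.1.1)
    (by simp [mul_assoc])
  simp at h4

end Aux

/-- **Lemma.** Let `⟨A|R⟩` be a C(4) presentation. If `w = X * Y * Z * w'` where
`X * Y * Z` is a relation word with maximal piece prefix `X` and middle word `Y`,
`X * Y` is a clean overlap prefix of `w`, and `p` is any piece, then
`ρ(p * w') < ρ(w)`. -/
theorem statement12 {A : Type*} (R : Set (FreeMonoid A × FreeMonoid A))
    (hC : SmallOverlapC R 4) (X Y Z w' p : FreeMonoid A)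
    (hMF : MiddleFact R X Y Z)
    (hover : IsOverlapPrefix R (X * Y * Z * w') (X * Y))
    (hclean : IsCleanRelationPrefix R (X * Y * Z * w') 1 X Y)
    (hp : IsPiece R p) :
    rho R (p * w') < rho R (X * Y * Z * w') := by
  -- `X * Y` is a clean overlap prefix of `X * Y * Z * w'`
  have hW : IsCleanOverlapPrefix R (X * Y * Z * w') (X * Y) :=
    ⟨hover, 1, X, Y, by rw [one_mul], hclean⟩
  have hex : ∃ q, IsCleanOverlapPrefix R (X * Y * Z * w') q := ⟨X * Y, hW⟩
  have hlen1 : hex.choose.length ≤ (X * Y * Z).length := lemU hMF hex.choose_spec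
  have hwlen : (X * Y * Z * w').length = (X * Y * Z).length + w'.length :=
    FreeMonoid.length_mul _ _
  rw [rho, rho, dif_pos hex]
  by_cases h2 : ∃ q, IsCleanOverlapPrefix R (p * w') q
  · rw [dif_pos h2]
    have hV := lemV hC hp h2.choose_spec
    have hle : h2.choose.length ≤ (p * w').length := by
      obtain ⟨⟨⟨t, ht⟩, -⟩, -⟩ := h2.choose_spec
      exact fpre_length ⟨t, ht⟩
    have hplen : (p * w').length = p.length + w'.length := FreeMonoid.length_mul _ _
    omega
  · rw [dif_neg h2]
    omega
end

section
/- Let ⟨A|R⟩ be an equivalence presentation satisfying the condition C(4). Then the monoid presented is left cancellative if and only if R contains no relation of the form (ar, as) where a ∈ A and r, s are words over A with r ≠ s. -/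
open FreeMonoid

namespace SO13

variable {A : Type*} (R : Set (FreeMonoid A × FreeMonoid A))

/-- `R` as a relation on lists. -/
def Rel (u v : List A) : Prop := (ofList u, ofList v) ∈ R

/-- relation word, list version -/
def RW (w : List A) : Prop := IsRelWord R (ofList w)

/-- piece, list version -/
def Pc (u : List A) : Prop := IsPiece R (ofList u)

variable {R}

lemma rw_left {m m' : List A} (h : Rel R m m') : RW R m := ⟨(ofList m, ofList m'), h, Or.inl rfl⟩

lemma rw_right {m m' : List A} (h : Rel R m m') : RW R m' := ⟨(ofList m, ofList m'), h, Or.inr rfl⟩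

lemma ofList_app (x y : List A) : ofList (x ++ y) = ofList x * ofList y := rfl

lemma isFactor_of_lists {u w x y : List A} (e : w = x ++ u ++ y) :
    IsFactor (ofList u) (ofList w) := ⟨ofList x, ofList y, by rw [e]; rfl⟩

/-- main piece constructor -/
lemma pc_intro {u w₁ w₂ x₁ y₁ x₂ y₂ : List A} (h₁ : RW R w₁) (h₂ : RW R w₂)
    (e₁ : w₁ = x₁ ++ u ++ y₁) (e₂ : w₂ = x₂ ++ u ++ y₂) (hne : w₁ ≠ w₂ ∨ x₁ ≠ x₂) : Pc R u := by
  by_cases hw : w₁ = w₂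
  · rcases hne with h | hx
    · exact absurd hw h
    · subst hw
      refine Or.inr (Or.inr ⟨ofList w₁, h₁, ofList x₁, ofList y₁, ofList x₂, ofList y₂, ?_, ?_, ?_⟩)
      · rw [e₁]; rfl
      · rw [e₂]; rfl
      · exact fun h => hx (ofList.injective h)
  · exact Or.inr (Or.inl ⟨ofList w₁, ofList w₂, h₁, h₂,
      fun h => hw (ofList.injective h), isFactor_of_lists e₁, isFactor_of_lists e₂⟩)


section C4

variable (hC : SmallOverlapC R 4)
include hC

lemma rw_not_nil : ¬ RW R ([] : List A) := fun h => by
  have := hC _ h [] (by simp) (by rfl)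
  simp at this

lemma rw_not_pc {w : List A} (h : RW R w) (hp : Pc R w) : False := by
  have := hC _ h [ofList w] (by simp only [List.mem_singleton, forall_eq]; exact hp) (by simp)
  simp at this

lemma rw_not_two {w x y : List A} (h : RW R w) (e : w = x ++ y) (hx : Pc R x) (hy : Pc R y) :
    False := by
  have := hC _ h [ofList x, ofList y]
    (by rintro z hz
        simp only [List.mem_cons, List.mem_singleton, List.not_mem_nil, or_false] at hz
        rcases hz with h' | h' <;> subst h' <;> assumption)
    (by simp only [List.prod_cons, List.prod_nil, mul_one, e]; rfl)
  simp at this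

/-- A relation word cannot occur as a proper factor of a relation word. -/
lemma noFactor {m w x y : List A} (h₁ : RW R m) (h₂ : RW R w) (e : w = x ++ m ++ y) :
    x = [] ∧ y = [] := by
  by_cases hmw : m = w
  · subst hmw
    have := congrArg List.length e
    simp at this
    constructor <;> [skip; skip] <;>
      (first
        | exact List.length_eq_zero_iff.mp (by omega)
        | exact List.length_eq_zero_iff.mp (by omega))
  · exact absurd (pc_intro (x₁ := []) (y₁ := []) h₁ h₂ (by simp) e (Or.inl hmw))
      (fun hp => rw_not_pc hC h₁ hp)

end C4

end SO13

namespace SO13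

variable {A : Type*}

/-- one rewriting step -/
def Stp (R : Set (FreeMonoid A × FreeMonoid A)) (u v : List A) : Prop :=
  ∃ x m m' y, Rel R m m' ∧ u = x ++ m ++ y ∧ v = x ++ m' ++ y

/-- chains of given length -/
inductive Ch (R : Set (FreeMonoid A × FreeMonoid A)) : ℕ → List A → List A → Prop
  | refl (u) : Ch R 0 u u
  | head {n u z v} : Stp R u z → Ch R n z v → Ch R (n + 1) u v

end SO13

namespace SO13

variable {A : Type*} {R : Set (FreeMonoid A × FreeMonoid A)}

lemma ch_zero {u v : List A} (h : Ch R 0 u v) : u = v := by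
  cases h; rfl

lemma ch_trans {m k : ℕ} {u v w : List A} (h₁ : Ch R m u v) (h₂ : Ch R k v w) :
    Ch R (m + k) u w := by
  induction h₁ with
  | refl => simpa using h₂
  | head s _ ih => rw [Nat.add_comm, ← Nat.add_assoc]
                   exact Ch.head s (by rw [Nat.add_comm]; exact ih h₂)

lemma ch_snoc {n : ℕ} {u v w : List A} (h : Ch R n u v) (s : Stp R v w) : Ch R (n + 1) u w :=
  ch_trans h (Ch.head s (Ch.refl w))

lemma ch_last {n : ℕ} {u v : List A} (h : Ch R (n + 1) u v) :
    ∃ z, Ch R n u z ∧ Stp R z v := by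
  induction n generalizing u with
  | zero =>
    rcases h with _ | ⟨s, h0⟩
    rcases h0 with _ | _
    exact ⟨u, Ch.refl u, s⟩
  | succ n ih =>
    rcases h with _ | ⟨s, h0⟩
    obtain ⟨z, hz, hs⟩ := ih h0
    exact ⟨z, Ch.head s hz, hs⟩

section Symm

variable (hsym : ∀ {u v : List A}, Rel R u v → Rel R v u)
include hsym

lemma stp_symm {u v : List A} (h : Stp R u v) : Stp R v u := by
  obtain ⟨x, m, m', y, hr, e₁, e₂⟩ := h
  exact ⟨x, m', m, y, hsym hr, e₂, e₁⟩

lemma ch_symm {n : ℕ} {u v : List A} (h : Ch R n u v) : Ch R n v u := by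
  induction h with
  | refl => exact Ch.refl _
  | head s _ ih => exact ch_snoc ih (stp_symm hsym s)

end Symm

lemma stp_context {u v p q : List A} (h : Stp R u v) : Stp R (p ++ u ++ q) (p ++ v ++ q) := by
  obtain ⟨x, m, m', y, hr, e₁, e₂⟩ := h
  exact ⟨p ++ x, m, m', y ++ q, hr, by simp [e₁], by simp [e₂]⟩

lemma ch_context {n : ℕ} {u v p q : List A} (h : Ch R n u v) :
    Ch R n (p ++ u ++ q) (p ++ v ++ q) := by
  induction h with
  | refl => exact Ch.refl _
  | head s _ ih => exact Ch.head (stp_context s) ih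

lemma ch_context_left {n : ℕ} {u v p : List A} (h : Ch R n u v) : Ch R n (p ++ u) (p ++ v) := by
  have := ch_context (p := p) (q := []) h
  simpa using this

lemma ch_context_right {n : ℕ} {u v q : List A} (h : Ch R n u v) : Ch R n (u ++ q) (v ++ q) := by
  have := ch_context (p := []) (q := q) h
  simpa using this

/-- the three-way splitting of `l₁ ++ l₂ = x ++ m ++ y` -/
lemma split3 {l₁ l₂ x m y : List A} (h : l₁ ++ l₂ = x ++ m ++ y) :
    (∃ x', x = l₁ ++ x' ∧ l₂ = x' ++ m ++ y)
    ∨ (∃ y', l₁ = x ++ m ++ y' ∧ y = y' ++ l₂)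
    ∨ (∃ s t, s ≠ [] ∧ t ≠ [] ∧ l₁ = x ++ s ∧ m = s ++ t ∧ l₂ = t ++ y) := by
  rw [List.append_assoc] at h
  rcases List.append_eq_append_iff.mp h with ⟨a, ha₁, ha₂⟩ | ⟨c, hc₁, hc₂⟩
  · exact Or.inl ⟨a, ha₁, by rw [ha₂, List.append_assoc]⟩
  · rcases List.append_eq_append_iff.mp hc₂ with ⟨a, ha₁, ha₂⟩ | ⟨t, ht₁, ht₂⟩
    · exact Or.inr (Or.inl ⟨a, by rw [hc₁, ha₁, List.append_assoc], ha₂⟩)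
    · by_cases hcn : c = []
      · subst hcn
        refine Or.inl ⟨[], by simpa using hc₁.symm, ?_⟩
        simp at ht₁
        rw [ht₂, ht₁]
        simp
      · by_cases htn : t = []
        · subst htn
          refine Or.inr (Or.inl ⟨[], ?_, by simpa using ht₂.symm⟩)
          rw [hc₁, ht₁]
          simp
        · exact Or.inr (Or.inr ⟨c, t, hcn, htn, hc₁, ht₁, ht₂⟩)

end SO13

namespace SO13

variable {A : Type*} {R : Set (FreeMonoid A × FreeMonoid A)}

variable (R) in
/-- The invariant: `Val v A₀ θ c` says that `v` is a valid state reachable from `A₀ ++ θ`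
with the anchor relation word `A₀`, and flattening cost at most `c`. -/
inductive Val : List A → List A → List A → ℕ → Prop
  | full {ω ξ θ A₀ : List A} {c₁ c : ℕ} : Rel R A₀ ω → Ch R c₁ ξ θ → c₁ + 1 ≤ c →
      Val (ω ++ ξ) A₀ θ c
  | cut {P S ν ξp θ v' A₀ ω : List A} {c₁ c₂ c : ℕ} : Rel R A₀ ω → ω = P ++ S → P ≠ [] →
      S ≠ [] → Pc R S → Ch R c₁ (ν ++ ξp) θ → Val v' (S ++ ν) ξp c₂ →
      c₁ + c₂ + 1 ≤ c → Val (P ++ v') A₀ θ c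

section Core

variable (hC : SmallOverlapC R 4) (hsym : ∀ {u v : List A}, Rel R u v → Rel R v u)
  (htrans : ∀ {u v w : List A}, Rel R u v → Rel R v w → Rel R u w)

include hsym in
lemma val_flatten {v A₀ θ : List A} {c : ℕ} (h : Val R v A₀ θ c) :
    ∃ L ≤ c, Ch R L v (A₀ ++ θ) := by
  induction h with
  | @full ω ξ θ A₀ c₁ c hrel hch hc =>
    refine ⟨c₁ + 1, hc, ?_⟩
    exact ch_snoc (ch_context_left hch) ⟨[], ω, A₀, θ, hsym hrel, by simp, by simp⟩
  | @cut P S ν ξp θ v' A₀ ω c₁ c₂ c hrel he hP hS hpc hch hsub hc ih =>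
    obtain ⟨L, hL, hchain⟩ := ih
    refine ⟨L + c₁ + 1, by omega, ?_⟩
    have h1 : Ch R L (P ++ v') (ω ++ (ν ++ ξp)) := by
      have := ch_context_left (p := P) hchain
      simpa [he] using this
    have h2 : Ch R c₁ (ω ++ (ν ++ ξp)) (ω ++ θ) := ch_context_left hch
    exact ch_snoc (ch_trans h1 h2) ⟨[], ω, A₀, θ, hsym hrel, by simp, by simp⟩

include hC in
lemma frontFactor {x m₀ ξ : List A} {c : ℕ} (h : Val R x m₀ ξ c) {m₂ π ν₂ rest : List A}
    (hm₂ : RW R m₂) (e : m₂ = π ++ ν₂) (hπ : π ≠ []) (hpc : Pc R π) (hν : ν₂ ≠ [])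
    (hx : x = ν₂ ++ rest) : False := by
  cases h with
  | @full ω ξ' θ A₀ c₁ c hrel hch hc =>
    rcases List.append_eq_append_iff.mp (hx.symm : ν₂ ++ rest = ω ++ ξ') with
      ⟨a, ha₁, _⟩ | ⟨c', hc₁, _⟩
    · have hpcν : Pc R ν₂ := pc_intro (x₁ := π) (y₁ := []) (x₂ := []) (y₂ := a) hm₂
        (rw_right hrel) (by simp [e]) (by simp [ha₁]) (Or.inr (by simpa using hπ))
      exact rw_not_two hC hm₂ e hpc hpcν
    · have := noFactor hC (rw_right hrel) hm₂ (by rw [e, hc₁, ← List.append_assoc])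
      exact hπ this.1
  | @cut P S ν ξp θ v' A₀ ω c₁ c₂ c hrel he hP hS hpcS hch hsub hc =>
    rcases List.append_eq_append_iff.mp (hx.symm : ν₂ ++ rest = P ++ v') with
      ⟨a, ha₁, _⟩ | ⟨c', hc₁, _⟩
    · have hpcν : Pc R ν₂ := pc_intro (x₁ := π) (y₁ := []) (x₂ := []) (y₂ := a ++ S) hm₂
        (rw_right hrel) (by simp [e]) (by rw [he, ha₁]; simp) (Or.inr (by simpa using hπ))
      exact rw_not_two hC hm₂ e hpc hpcν
    · have hpcP : Pc R P := pc_intro (x₁ := π) (y₁ := c') (x₂ := []) hm₂ (rw_right hrel)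
        (by rw [e, hc₁, ← List.append_assoc]) (by simpa using he)
        (Or.inr (by simpa using hπ))
      exact rw_not_two hC (rw_right hrel) he hpcP hpcS

include hC hsym htrans in
lemma valStep {B : ℕ}
    (oracle : ∀ k, k ≤ B → ∀ p u v : List A, Ch R k (p ++ u) (p ++ v) → ∃ L ≤ k, Ch R L u v)
    {v A₀ θ : List A} {c : ℕ} (hv : Val R v A₀ θ c) :
    c ≤ B → ∀ v₂ : List A, Stp R v v₂ → Val R v₂ A₀ θ (c + 1) := by
  induction hv with
  | @full ω ξ θ A₀ c₁ c hrel hch hc =>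
    intro hcB v₂ hs
    obtain ⟨x, m, m', y, hr, e₁, e₂⟩ := hs
    rcases split3 e₁ with ⟨x', hx', hξ⟩ | ⟨y', hω, hy⟩ | ⟨s, t, hsn, htn, hω, hm, hξ⟩
    · -- step inside ξ
      subst hx'
      have hch2 : Ch R (c₁ + 1) (x' ++ m' ++ y) θ :=
        Ch.head ⟨x', m', m, y, hsym hr, rfl, hξ⟩ hch
      have : Val R (ω ++ (x' ++ m' ++ y)) A₀ θ (c + 1) := Val.full hrel hch2 (by omega)
      simpa [e₂] using this
    · -- m inside ω : forces m = ω
      obtain ⟨hx0, hy0⟩ := noFactor hC (rw_left hr) (rw_right hrel) hω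
      subst hx0; subst hy0
      simp only [List.nil_append, List.append_nil] at hω hy
      have : Val R (m' ++ ξ) A₀ θ (c + 1) :=
        Val.full (htrans hrel (hω ▸ hr)) hch (by omega)
      simpa [e₂, hy] using this
    · by_cases hx : x = []
      · -- m = ω ++ t : impossible
        subst hx
        simp only [List.nil_append] at hω
        have := noFactor hC (rw_right hrel) (rw_left hr)
          (show m = [] ++ ω ++ t by rw [hm, hω]; simp)
        exact absurd this.2 htn
      · -- push
        have hpcs : Pc R s := pc_intro (x₁ := x) (y₁ := []) (x₂ := []) (y₂ := t)
          (rw_right hrel) (rw_left hr) (by simp [hω]) (by simp [hm]) (Or.inr hx)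
        have hsub : Val R (m' ++ y) (s ++ t) y 1 :=
          Val.full (hm ▸ hr) (Ch.refl y) le_rfl
        have : Val R (x ++ (m' ++ y)) A₀ θ (c + 1) :=
          Val.cut hrel hω hx hsn hpcs (hξ ▸ hch) hsub (by omega)
        simpa [e₂] using this
  | @cut P S ν ξp θ v' A₀ ω c₁ c₂ c hrel he hP hS hpcS hch hsub hc ih =>
    intro hcB v₂ hs
    obtain ⟨x, m, m', y, hr, e₁, e₂⟩ := hs
    rcases split3 e₁ with ⟨x', hx', hv'⟩ | ⟨y', hPm, hy⟩ | ⟨s, t, hsn, htn, hPx, hm, hv'⟩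
    · -- step inside v'
      subst hx'
      have hsub' : Val R (x' ++ m' ++ y) (S ++ ν) ξp (c₂ + 1) :=
        ih (by omega) _ ⟨x', m, m', y, hr, hv', rfl⟩
      have : Val R (P ++ (x' ++ m' ++ y)) A₀ θ (c + 1) :=
        Val.cut hrel he hP hS hpcS hch hsub' (by omega)
      simpa [e₂] using this
    · -- m inside P : impossible since S ≠ []
      have := noFactor hC (rw_left hr) (rw_right hrel)
        (show ω = x ++ m ++ (y' ++ S) by rw [he, hPm]; simp)
      rcases List.append_eq_nil_iff.mp this.2 with ⟨-, h0⟩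
      exact (hS h0).elim
    · by_cases hx : x = []
      · subst hx
        simp only [List.nil_append] at hPx
        subst hPx
        by_cases hmω : m = ω
        · -- pop
          have htS : t = S := by
            have h0 : P ++ t = P ++ S := by rw [← hm, hmω, he]
            exact List.append_cancel_left h0
          obtain ⟨L, hL, hfl⟩ := val_flatten hsym hsub
          have hfl' : Ch R L (S ++ y) (S ++ (ν ++ ξp)) := by
            have h1 : v' = S ++ y := by rw [hv', htS]
            rw [← h1, ← List.append_assoc]
            exact hfl
          obtain ⟨L', hL', hchy⟩ := oracle L (by omega) S y (ν ++ ξp) hfl'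
          have : Val R (m' ++ y) A₀ θ (c + 1) :=
            Val.full (htrans hrel (hmω ▸ hr)) (ch_trans hchy hch) (by omega)
          simpa [e₂] using this
        · -- foreign front : impossible
          have hpcP : Pc R P := pc_intro (x₁ := []) (y₁ := t) (x₂ := []) (y₂ := S)
            (rw_left hr) (rw_right hrel) (by simp [hm]) (by simp [he]) (Or.inl hmω)
          exact (frontFactor hC hsub (rw_left hr) (by simpa using hm) hP hpcP htn hv').elim
      · -- crossing with nonempty offset : impossible
        have hpcs : Pc R s := pc_intro (x₁ := x) (y₁ := S) (x₂ := []) (y₂ := t)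
          (rw_right hrel) (rw_left hr) (by simp [he, hPx]) (by simp [hm]) (Or.inr hx)
        exact (frontFactor hC hsub (rw_left hr) hm hsn hpcs htn hv').elim


lemma val_mono {v A₀ θ : List A} {c c' : ℕ} (h : Val R v A₀ θ c) (hle : c ≤ c') :
    Val R v A₀ θ c' := by
  cases h with
  | full hrel hch hc => exact Val.full hrel hch (le_trans hc hle)
  | cut hrel he hP hS hpcS hch hsub hc => exact Val.cut hrel he hP hS hpcS hch hsub (le_trans hc hle)

include hC hsym htrans in
lemma valChain {B : ℕ}
    (oracle : ∀ k, k ≤ B → ∀ p u v : List A, Ch R k (p ++ u) (p ++ v) → ∃ L ≤ k, Ch R L u v)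
    {k : ℕ} {v z A₀ θ : List A} (hch : Ch R k v z) :
    ∀ c, Val R v A₀ θ c → c + k ≤ B → Val R z A₀ θ (c + k) := by
  induction hch with
  | refl => intro c hv _; simpa using hv
  | @head n u' z' v' s ch ih =>
    intro c hv hB
    have h1 : Val R z' A₀ θ (c + 1) := valStep hC hsym htrans oracle hv (by omega) _ s
    have h2 := ih (c + 1) h1 (by omega)
    exact val_mono h2 (by omega)

include hC hsym in
lemma readoff {B : ℕ}
    (oracle : ∀ k, k ≤ B → ∀ p u v : List A, Ch R k (p ++ u) (p ++ v) → ∃ L ≤ k, Ch R L u v)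
    {v A₀ θ w' σ : List A} {c : ℕ} (hv : Val R v A₀ θ c) (hcB : c ≤ B) (hw' : RW R w')
    (e : v = w' ++ σ) : Rel R A₀ w' ∧ ∃ L ≤ c, Ch R L σ θ := by
  cases hv with
  | @full ω ξ θ A₀ c₁ c hrel hch hc =>
    rcases List.append_eq_append_iff.mp (e.symm : w' ++ σ = ω ++ ξ) with
      ⟨a, ha₁, ha₂⟩ | ⟨b, hb₁, hb₂⟩
    · -- ω = w' ++ a
      obtain ⟨-, ha0⟩ := noFactor hC hw' (rw_right hrel)
        (show ω = [] ++ w' ++ a by simpa using ha₁)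
      subst ha0
      simp only [List.append_nil] at ha₁
      rw [← ha₁] at hw' ⊢
      have hσ : σ = ξ := by simpa [ha₁] using ha₂
      exact ⟨hrel, c₁, by omega, hσ ▸ hch⟩
    · -- w' = ω ++ b
      obtain ⟨-, hb0⟩ := noFactor hC (rw_right hrel) hw'
        (show w' = [] ++ ω ++ b by simpa using hb₁)
      subst hb0
      simp only [List.append_nil] at hb₁
      rw [hb₁]
      have hσ : σ = ξ := by
        have := e.symm
        rw [hb₁] at this
        exact List.append_cancel_left this
      exact ⟨hrel, c₁, by omega, hσ ▸ hch⟩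
  | @cut P S ν ξp θ v' A₀ ω c₁ c₂ c hrel he hP hS hpcS hch hsub hc =>
    rcases List.append_eq_append_iff.mp (e.symm : w' ++ σ = P ++ v') with
      ⟨a, ha₁, ha₂⟩ | ⟨b, hb₁, hb₂⟩
    · -- P = w' ++ a : w' proper prefix of ω, impossible
      obtain ⟨-, h0⟩ := noFactor hC hw' (rw_right hrel)
        (show ω = [] ++ w' ++ (a ++ S) by rw [he, ha₁]; simp)
      rcases List.append_eq_nil_iff.mp h0 with ⟨-, h1⟩
      exact (hS h1).elim
    · -- w' = P ++ b
      by_cases hb : b = []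
      · subst hb
        simp only [List.append_nil] at hb₁
        obtain ⟨-, h0⟩ := noFactor hC hw' (rw_right hrel)
          (show ω = [] ++ w' ++ S by rw [he, hb₁]; simp)
        exact (hS h0).elim
      · by_cases hwω : w' = ω
        · -- pop read-off
          have hbS : b = S := by
            have h0 : P ++ b = P ++ S := by rw [← hb₁, hwω, he]
            exact List.append_cancel_left h0
          obtain ⟨L, hL, hfl⟩ := val_flatten hsym hsub
          have hfl' : Ch R L (S ++ σ) (S ++ (ν ++ ξp)) := by
            have h1 : v' = S ++ σ := by rw [hb₂, hbS]
            rw [← h1, ← List.append_assoc]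
            exact hfl
          obtain ⟨L', hL', hchy⟩ := oracle L (by omega) S σ (ν ++ ξp) hfl'
          exact ⟨hwω ▸ hrel, L' + c₁, by omega, ch_trans hchy hch⟩
        · -- foreign read-off : impossible
          have hpcP : Pc R P := pc_intro (x₁ := []) (y₁ := b) (x₂ := []) (y₂ := S)
            hw' (rw_right hrel) (by simp [hb₁]) (by simp [he]) (Or.inl hwω)
          exact (frontFactor hC hsub hw' hb₁ hP hpcP hb hb₂).elim

include hC hsym htrans in
lemma K2 {B k : ℕ}
    (oracle : ∀ k, k ≤ B → ∀ p u v : List A, Ch R k (p ++ u) (p ++ v) → ∃ L ≤ k, Ch R L u v)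
    {w ρ w' σ : List A} (hrw : Rel R w w) (hk : k + 1 ≤ B)
    (hch : Ch R k (w ++ ρ) (w' ++ σ)) (hw' : RW R w') :
    Rel R w w' ∧ ∃ L ≤ k + 1, Ch R L ρ σ := by
  have h0 : Val R (w ++ ρ) w ρ 1 := Val.full hrw (Ch.refl ρ) le_rfl
  have h1 : Val R (w' ++ σ) w ρ (1 + k) := valChain hC hsym htrans oracle hch 1 h0 (by omega)
  obtain ⟨hrel, L, hL, hcc⟩ := readoff hC hsym oracle h1 (by omega) hw' rfl
  exact ⟨hrel, L, by omega, ch_symm hsym hcc⟩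


include hC hsym htrans in
lemma SL (hrefl : ∀ {w : List A}, RW R w → Rel R w w)
    (hnr : ∀ {a : A} {u₁ u₂ : List A}, Rel R (a :: u₁) (a :: u₂) → u₁ = u₂) :
    ∀ n : ℕ, ∀ (a : A) (u v : List A), Ch R n (a :: u) (a :: v) → ∃ L ≤ n, Ch R L u v := by
  intro n
  induction n using Nat.strong_induction_on with
  | _ n IH =>
    have can : ∀ p : List A, ∀ k, k < n → ∀ u v : List A,
        Ch R k (p ++ u) (p ++ v) → ∃ L ≤ k, Ch R L u v := by
      intro p
      induction p with
      | nil => intro k _ u v h; exact ⟨k, le_rfl, by simpa using h⟩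
      | cons b p ihp =>
        intro k hk u v h
        obtain ⟨L, hL, h1⟩ := IH k hk b (p ++ u) (p ++ v) (by simpa using h)
        obtain ⟨L', hL', h2⟩ := ihp L (lt_of_le_of_lt hL hk) u v h1
        exact ⟨L', le_trans hL' hL, h2⟩
    intro a u v hch
    cases n with
    | zero =>
      cases hch
      exact ⟨0, le_rfl, Ch.refl u⟩
    | succ n' =>
      obtain ⟨z, hfront, hlast⟩ := ch_last hch
      obtain ⟨x, m, m', y, hr, ez, ev⟩ := hlast
      cases x with
      | cons b x' =>
        rw [List.cons_append, List.cons_append] at ev ez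
        injection ev with hb hv
        subst hb
        rw [ez] at hfront
        obtain ⟨L, hL, h1⟩ := IH n' (Nat.lt_succ_self n') a u (x' ++ m ++ y) hfront
        exact ⟨L + 1, by omega, ch_snoc h1 ⟨x', m, m', y, hr, rfl, hv⟩⟩
      | nil =>
        simp only [List.nil_append] at ez ev
        rcases hm'e : m' with - | ⟨b', mt'⟩
        · exact absurd (hm'e ▸ rw_right hr) (rw_not_nil hC)
        · subst hm'e
          rw [List.cons_append] at ev
          injection ev with hb' hv
          subst hb'
          cases n' with
          | zero =>
            cases hfront
            rcases hme : m with - | ⟨b₂, mt⟩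
            · exact absurd (hme ▸ rw_left hr) (rw_not_nil hC)
            · subst hme
              rw [List.cons_append] at ez
              injection ez with hb₂ hu
              subst hb₂
              have := hnr hr
              exact ⟨0, by omega, by rw [hu, hv, this]; exact Ch.refl _⟩
          | succ n'' =>
            rcases hfront with - | ⟨hs₁, hrest⟩
            obtain ⟨x₂, m₂, m₂', y₂, hr₂, eu, ez₁⟩ := hs₁
            cases x₂ with
            | cons b₂ x₂' =>
              rw [List.cons_append, List.cons_append] at eu ez₁
              injection eu with hb₂ hu
              subst hb₂
              have hch2 : Ch R (n'' + 1) (a :: (x₂' ++ m₂' ++ y₂)) (a :: v) := by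
                rw [← ez₁]
                exact ch_snoc hrest ⟨[], m, a :: mt', y, hr, by simpa using ez, by simp [hv]⟩
              obtain ⟨L, hL, h1⟩ := IH (n'' + 1) (by omega) a (x₂' ++ m₂' ++ y₂) v hch2
              exact ⟨L + 1, by omega, Ch.head ⟨x₂', m₂, m₂', y₂, hr₂, hu, rfl⟩ h1⟩
            | nil =>
              simp only [List.nil_append] at eu ez₁
              rcases hme : m₂ with - | ⟨b₂, mt₂⟩
              · exact absurd (hme ▸ rw_left hr₂) (rw_not_nil hC)
              · subst hme
                rw [List.cons_append] at eu
                injection eu with hb₂ hu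
                subst hb₂
                have hmid : Ch R n'' (m₂' ++ y₂) (m ++ y) := by rw [← ez₁, ← ez]; exact hrest
                have orc : ∀ k, k ≤ n'' + 1 → ∀ p u v : List A,
                    Ch R k (p ++ u) (p ++ v) → ∃ L ≤ k, Ch R L u v :=
                  fun k hk p u v h => can p k (by omega) u v h
                obtain ⟨hrel₁, L, hL, hyy⟩ := K2 hC hsym htrans orc
                  (hrefl (rw_right hr₂)) le_rfl hmid (rw_left hr)
                have hrel₂ : Rel R (a :: mt₂) (a :: mt') := htrans (htrans hr₂ hrel₁) hr
                have hmt := hnr hrel₂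
                refine ⟨L, by omega, ?_⟩
                rw [hu, hv, hmt]
                exact ch_context_left hyy

end Core

end SO13

namespace SO13

variable {A : Type*} {R : Set (FreeMonoid A × FreeMonoid A)}

lemma stp_presCon {u v : List A} (h : Stp R u v) : presCon R (ofList u) (ofList v) := by
  obtain ⟨x, m, m', y, hr, e₁, e₂⟩ := h
  subst e₁; subst e₂
  exact ConGen.Rel.mul (ConGen.Rel.mul (ConGen.Rel.refl (ofList x)) (ConGen.Rel.of _ _ hr))
    (ConGen.Rel.refl (ofList y))

lemma ch_presCon {n : ℕ} {u v : List A} (h : Ch R n u v) : presCon R (ofList u) (ofList v) := by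
  induction h with
  | refl => exact ConGen.Rel.refl _
  | head s _ ih => exact ConGen.Rel.trans (stp_presCon s) ih

lemma presCon_ch (hsym : ∀ {u v : List A}, Rel R u v → Rel R v u) {u v : FreeMonoid A}
    (h : presCon R u v) : ∃ n, Ch R n (toList u) (toList v) := by
  induction h with
  | of x y hxy =>
    exact ⟨1, Ch.head ⟨[], toList x, toList y, [], hxy, by simp, by simp⟩ (Ch.refl _)⟩
  | refl x => exact ⟨0, Ch.refl _⟩
  | symm _ ih => obtain ⟨n, hn⟩ := ih; exact ⟨n, ch_symm hsym hn⟩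
  | trans _ _ ih₁ ih₂ =>
    obtain ⟨n, hn⟩ := ih₁; obtain ⟨m, hm⟩ := ih₂
    exact ⟨n + m, ch_trans hn hm⟩
  | mul _ _ ih₁ ih₂ =>
    obtain ⟨n, hn⟩ := ih₁; obtain ⟨m, hm⟩ := ih₂
    exact ⟨n + m, ch_trans (ch_context_right hn) (ch_context_left hm)⟩

end SO13


/-- **Theorem.** The monoid presented by a C(4) equivalence presentation `⟨A|R⟩` is
left cancellative if and only if `R` contains no relation of the form `(a r, a s)`
with `a ∈ A` and `r ≠ s`. -/
theorem statement13 {A : Type*} (R : Set (FreeMonoid A × FreeMonoid A))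
    (heq : IsEquivPres R) (hC : SmallOverlapC R 4) :
    (∀ x y z : (presCon R).Quotient, x * y = x * z → y = z) ↔
      ¬ ∃ (a : A) (r s : FreeMonoid A), r ≠ s ∧ (of a * r, of a * s) ∈ R := by

  classical
  open SO13 in
  obtain ⟨hrefl0, hsym0, htrans0⟩ := heq
  have hsym : ∀ {u v : List A}, Rel R u v → Rel R v u := fun h => hsym0 _ _ h
  have htrans : ∀ {u v w : List A}, Rel R u v → Rel R v w → Rel R u w :=
    fun h h' => htrans0 _ _ _ h h'
  have hrefl : ∀ {w : List A}, RW R w → Rel R w w := fun h => hrefl0 _ h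
  constructor
  · rintro hcanc ⟨a, r, s, hrs, hmem⟩
    have h1 : presCon R (of a * r) (of a * s) := ConGen.Rel.of _ _ hmem
    have h2 : (↑r : (presCon R).Quotient) = ↑s :=
      hcanc (↑(of a)) (↑r) (↑s) (by rw [← Con.coe_mul, ← Con.coe_mul]; exact (Con.eq _).mpr h1)
    obtain ⟨n, hn⟩ := presCon_ch hsym ((Con.eq _).mp h2)
    have hRW : RW R (a :: toList r) := ⟨(of a * r, of a * s), hmem, Or.inl rfl⟩
    cases n with
    | zero => exact hrs (toList.injective (ch_zero hn))
    | succ n' =>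
      rcases hn with - | ⟨hs₁, -⟩
      obtain ⟨x, m, m', y, hr', e₁, -⟩ := hs₁
      have := noFactor hC (rw_left hr') hRW
        (show a :: toList r = (a :: x) ++ m ++ y by rw [e₁]; simp)
      simp at this
  · intro hnr x y z
    have hnr' : ∀ {a : A} {u₁ u₂ : List A}, Rel R (a :: u₁) (a :: u₂) → u₁ = u₂ := by
      intro a u₁ u₂ h
      by_contra hne
      exact hnr ⟨a, ofList u₁, ofList u₂, fun he => hne (ofList.injective he), h⟩
    have cancel : ∀ (pl : List A) (n : ℕ) (ul vl : List A),
        Ch R n (pl ++ ul) (pl ++ vl) → ∃ L, Ch R L ul vl := by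
      intro pl
      induction pl with
      | nil => exact fun n ul vl h => ⟨n, by simpa using h⟩
      | cons b pl ih =>
        intro n ul vl h
        obtain ⟨L, -, h1⟩ := SL hC hsym htrans hrefl hnr' n b (pl ++ ul) (pl ++ vl)
          (by simpa using h)
        exact ih L _ _ h1
    induction x using Con.induction_on with | _ p =>
    induction y using Con.induction_on with | _ u =>
    induction z using Con.induction_on with | _ v =>
    intro h
    rw [← Con.coe_mul, ← Con.coe_mul] at h
    obtain ⟨n, hn⟩ := presCon_ch hsym ((Con.eq _).mp h)
    obtain ⟨L, hL⟩ := cancel (toList p) n (toList u) (toList v) hn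
    exact (Con.eq _).mpr (ch_presCon hL)
end
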